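/- arXiv:2509.03589 — 8 statements merged into one kernel-verified Lean document; each statement's English description precedes it below -/
import Mathlib

section
/- For every bounded operator a on H, the group average a_S exists (i.e. for each ψ the Bochner integral ∫_S U(s) a U(s)⁻¹ ψ ds exists and defines a bounded operator a_S), a_S commutes with U(t) for every t ∈ S, and if a already commutes with U(s) for all s ∈ S then a_S = a. Moreover, under the factorization assumption, if a ∈ M then a_S ∈ M. -/
open MeasureTheory

/-- For every bounded operator `a` on `H`, the group average `a_S`
exists (the Bochner integrals `∫ s, U s (a (U s⁻¹ ψ)) ∂μ` exist and define a bounded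
operator `a_S`), `a_S` commutes with `U t` for every `t ∈ S`, and if `a` already
commutes with every `U s` then `a_S = a`.  Moreover, under the factorization
assumption (`U s = u v` with `u ∈ M`, `v ∈ M.commutant` unitaries), if `a ∈ M`
then `a_S ∈ M`. -/
theorem group_average_exists
    {H : Type*} [NormedAddCommGroup H] [InnerProductSpace ℂ H] [CompleteSpace H]
    {S : Type*} [Group S] [TopologicalSpace S] [IsTopologicalGroup S]
    [CompactSpace S] [T2Space S] [MeasurableSpace S] [BorelSpace S]
    (μ : Measure S) [μ.IsHaarMeasure] [IsProbabilityMeasure μ]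
    [μ.IsMulRightInvariant] [μ.IsInvInvariant]
    (U : S → (H →L[ℂ] H))
    (hU_mul : ∀ s t : S, U (s * t) = U s * U t)
    (hU_unitary : ∀ s : S, U s ∈ unitary (H →L[ℂ] H))
    (hU_cont : ∀ ψ : H, Continuous fun s => U s ψ)
    (M : VonNeumannAlgebra H)
    (hfac : ∀ s : S, ∃ u v : H →L[ℂ] H, u ∈ M ∧ v ∈ M.commutant ∧
      u ∈ unitary (H →L[ℂ] H) ∧ v ∈ unitary (H →L[ℂ] H) ∧ U s = u * v)
    (a : H →L[ℂ] H) :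
    (∀ ψ : H, Integrable (fun s => U s (a (U s⁻¹ ψ))) μ) ∧
    ∃ aS : H →L[ℂ] H,
      (∀ ψ : H, aS ψ = ∫ s, U s (a (U s⁻¹ ψ)) ∂μ) ∧
      (∀ t : S, aS * U t = U t * aS) ∧
      ((∀ s : S, a * U s = U s * a) → aS = a) ∧
      (a ∈ M → aS ∈ M) := by
  -- `U 1 = 1`
  have hU1 : U 1 = 1 := by
    have h := hU_mul 1 1
    rw [one_mul] at h
    have hu := (Unitary.mem_iff.mp (hU_unitary 1)).1
    calc U 1 = 1 * U 1 := (one_mul _).symm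
    _ = (star (U 1) * U 1) * U 1 := by rw [hu]
    _ = star (U 1) * (U 1 * U 1) := by rw [mul_assoc]
    _ = star (U 1) * U 1 := by rw [← h]
    _ = 1 := hu
  have hinv : ∀ s : S, U s⁻¹ * U s = 1 := fun s => by
    rw [← hU_mul, inv_mul_cancel, hU1]
  have hinv' : ∀ s : S, U s * U s⁻¹ = 1 := fun s => by
    rw [← hU_mul, mul_inv_cancel, hU1]
  -- norm preservation
  have hnorm : ∀ (s : S) (x : H), ‖U s x‖ = ‖x‖ := fun s x =>
    (U s).norm_map_of_mem_unitary (hU_unitary s) x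
  -- continuity of `s ↦ U s (f s)` for continuous `f`
  have hcont_comp : ∀ (f : S → H), Continuous f →
      Continuous (fun s => U s (f s)) := by
    intro f hf
    rw [continuous_iff_continuousAt]
    intro t
    have h1 : ContinuousAt (fun s => U s (f s - f t)) t := by
      have : Filter.Tendsto (fun s => U s (f s - f t)) (nhds t) (nhds 0) := by
        rw [tendsto_zero_iff_norm_tendsto_zero]
        have : (fun s => ‖U s (f s - f t)‖) = fun s => ‖f s - f t‖ := by
          funext s; exact hnorm s _
        rw [this]
        have : Filter.Tendsto (fun s => f s - f t) (nhds t) (nhds 0) := by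
          have := (hf.tendsto t).sub_const (f t)
          simpa using this
        exact (tendsto_zero_iff_norm_tendsto_zero.mp this)
      unfold ContinuousAt
      simpa using this
    have h2 : ContinuousAt (fun s => U s (f t)) t := (hU_cont (f t)).continuousAt
    have := h1.add h2
    have heq : (fun s => U s (f s - f t) + U s (f t)) = fun s => U s (f s) := by
      funext s
      rw [← map_add]
      congr 1
      abel
    rw [← heq]; exact this
  -- continuity of s ↦ U s⁻¹ ψ
  have hcont_inv : ∀ ψ : H, Continuous fun s : S => U s⁻¹ ψ := fun ψ =>
    (hU_cont ψ).comp continuous_inv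
  -- integrands are continuous
  have hcont_int : ∀ ψ : H, Continuous fun s => U s (a (U s⁻¹ ψ)) := by
    intro ψ
    exact hcont_comp _ (a.continuous.comp (hcont_inv ψ))
  -- integrability
  have hint : ∀ ψ : H, Integrable (fun s => U s (a (U s⁻¹ ψ))) μ := by
    intro ψ
    exact (hcont_int ψ).integrable_of_hasCompactSupport
      (isClosed_tsupport _).isCompact
  refine ⟨hint, ?_⟩
  -- the averaged operator
  let T : H →ₗ[ℂ] H :=
    { toFun := fun ψ => ∫ s, U s (a (U s⁻¹ ψ)) ∂μ
      map_add' := by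
        intro x y
        show (∫ s, U s (a (U s⁻¹ (x + y))) ∂μ)
            = (∫ s, U s (a (U s⁻¹ x)) ∂μ) + ∫ s, U s (a (U s⁻¹ y)) ∂μ
        rw [← integral_add (hint x) (hint y)]
        congr 1
        funext s
        simp
      map_smul' := by
        intro c x
        show (∫ s, U s (a (U s⁻¹ (c • x))) ∂μ) = c • ∫ s, U s (a (U s⁻¹ x)) ∂μ
        rw [← integral_smul]
        congr 1
        funext s
        simp }
  have hbound : ∀ ψ : H, ‖T ψ‖ ≤ ‖a‖ * ‖ψ‖ := by
    intro ψ
    have : ‖∫ s, U s (a (U s⁻¹ ψ)) ∂μ‖ ≤ (‖a‖ * ‖ψ‖) * (μ Set.univ).toReal := by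
      apply norm_integral_le_of_norm_le_const
      filter_upwards with s
      rw [hnorm s _]
      calc ‖a (U s⁻¹ ψ)‖ ≤ ‖a‖ * ‖U s⁻¹ ψ‖ := a.le_opNorm _
      _ = ‖a‖ * ‖ψ‖ := by rw [hnorm]
    simp [measure_univ] at this; exact this
  let aS : H →L[ℂ] H := T.mkContinuous ‖a‖ hbound
  have haS : ∀ ψ : H, aS ψ = ∫ s, U s (a (U s⁻¹ ψ)) ∂μ := fun ψ => rfl
  refine ⟨aS, haS, ?_, ?_, ?_⟩
  · -- commutes with U t
    intro t
    ext ψ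
    show aS (U t ψ) = U t (aS ψ)
    rw [haS, haS]
    have key : (∫ s, U s (a (U s⁻¹ (U t ψ))) ∂μ)
        = ∫ s, U t (U s (a (U s⁻¹ ψ))) ∂μ := by
      have hsub := integral_mul_left_eq_self
        (μ := μ) (fun s => U s (a (U s⁻¹ (U t ψ)))) t
      rw [← hsub]
      congr 1
      funext s
      have h1 : U (t * s) = U t * U s := hU_mul t s
      have h2 : U (t * s)⁻¹ (U t ψ) = U s⁻¹ ψ := by
        have : U (t * s)⁻¹ * U t = U s⁻¹ := by
          have : U (t * s)⁻¹ * U t = U ((t * s)⁻¹ * t) := (hU_mul _ _).symm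
          rw [this]
          congr 1
          group
        calc U (t * s)⁻¹ (U t ψ) = (U (t * s)⁻¹ * U t) ψ := rfl
        _ = U s⁻¹ ψ := by rw [this]
      rw [h2, h1]
      rfl
    rw [key]
    exact ((U t).integral_comp_comm (hint ψ))
  · -- if a commutes with all U s then aS = a
    intro hcomm
    ext ψ
    show aS ψ = a ψ
    rw [haS]
    have : (fun s => U s (a (U s⁻¹ ψ))) = fun _ => a ψ := by
      funext s
      have h : U s * a = a * U s := (hcomm s).symm
      calc U s (a (U s⁻¹ ψ)) = (U s * a * U s⁻¹) ψ := rfl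
      _ = (a * (U s * U s⁻¹)) ψ := by rw [h, mul_assoc]
      _ = a ψ := by rw [hinv']; simp
    rw [this, integral_const]
    simp [measure_univ]
  · -- membership in M
    intro haM
    -- each conjugate U s * a * U s⁻¹ commutes with every x ∈ M.commutant
    have hconj : ∀ s : S, ∀ x ∈ M.commutant,
        (U s * a * U s⁻¹) * x = x * (U s * a * U s⁻¹) := by
      intro s x hx
      obtain ⟨u, v, huM, hvM, huU, hvU, hfacs⟩ := hfac s
      have hvv : v * star v = 1 := (Unitary.mem_iff.mp hvU).2
      have huu : u * star u = 1 := (Unitary.mem_iff.mp huU).2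
      have hUsinv : U s⁻¹ = star v * star u := by
        have h1 : U s * (star v * star u) = 1 := by
          rw [hfacs]
          calc u * v * (star v * star u) = u * (v * star v) * star u := by
                noncomm_ring
          _ = 1 := by rw [hvv, mul_one, huu]
        calc U s⁻¹ = U s⁻¹ * (U s * (star v * star u)) := by rw [h1, mul_one]
        _ = (U s⁻¹ * U s) * (star v * star u) := by rw [mul_assoc]
        _ = star v * star u := by rw [hinv, one_mul]
      have hva : v * a = a * v :=
        (VonNeumannAlgebra.mem_commutant_iff.mp hvM a haM).symm
      have hred : U s * a * U s⁻¹ = u * a * star u := by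
        rw [hfacs, hUsinv]
        calc u * v * a * (star v * star u)
            = u * (v * a) * star v * star u := by noncomm_ring
        _ = u * (a * v) * star v * star u := by rw [hva]
        _ = u * a * (v * star v) * star u := by noncomm_ring
        _ = u * a * star u := by rw [hvv, mul_one]
      have hmem : u * a * star u ∈ M := mul_mem (mul_mem huM haM) (star_mem huM)
      rw [hred]
      have := VonNeumannAlgebra.mem_commutant_iff.mp hx (u * a * star u) hmem
      exact this
    -- aS commutes with every x ∈ M.commutant
    have hScomm : ∀ x ∈ M.commutant, x * aS = aS * x := by
      intro x hx
      ext ψ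
      show x (aS ψ) = aS (x ψ)
      rw [haS, haS]
      rw [← x.integral_comp_comm (hint ψ)]
      congr 1
      funext s
      have := congrArg (fun (b : H →L[ℂ] H) => b ψ) (hconj s x hx)
      simpa using this.symm
    have : aS ∈ M.commutant.commutant := by
      rw [VonNeumannAlgebra.mem_commutant_iff]
      exact hScomm
    rwa [VonNeumannAlgebra.commutant_commutant] at this
end

section
/- Under the factorization assumption, the commutation requirement in the definition of the constrained algebra is redundant: the set {P_S a P_S : a ∈ M and a U(s) = U(s) a for all s ∈ S} is equal to the set {P_S a P_S : a ∈ M}. -/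
open MeasureTheory

/-- Under the factorization assumption, the commutation requirement in
the definition of the constrained algebra is redundant:
`{P_S a P_S : a ∈ M, [a, U s] = 0 ∀ s}` equals `{P_S a P_S : a ∈ M}`. -/
theorem constrained_algebra_no_commutation_needed
    {H : Type*} [NormedAddCommGroup H] [InnerProductSpace ℂ H] [CompleteSpace H]
    {S : Type*} [Group S] [TopologicalSpace S] [IsTopologicalGroup S]
    [CompactSpace S] [T2Space S] [MeasurableSpace S] [BorelSpace S]
    (μ : Measure S) [μ.IsHaarMeasure] [IsProbabilityMeasure μ]
    [μ.IsMulRightInvariant] [μ.IsInvInvariant]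
    (U : S → (H →L[ℂ] H))
    (hU_mul : ∀ s t : S, U (s * t) = U s * U t)
    (hU_unitary : ∀ s : S, U s ∈ unitary (H →L[ℂ] H))
    (hU_cont : ∀ ψ : H, Continuous fun s => U s ψ)
    (M : VonNeumannAlgebra H)
    (hfac : ∀ s : S, ∃ u v : H →L[ℂ] H, u ∈ M ∧ v ∈ M.commutant ∧
      u ∈ unitary (H →L[ℂ] H) ∧ v ∈ unitary (H →L[ℂ] H) ∧ U s = u * v)
    (P : H →L[ℂ] H) (hP : ∀ ψ : H, P ψ = ∫ s, U s ψ ∂μ) :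
    {x : H →L[ℂ] H | ∃ a ∈ M, (∀ s : S, a * U s = U s * a) ∧ x = P * a * P} =
      {x : H →L[ℂ] H | ∃ a ∈ M, x = P * a * P} := by
  ext x
  simp only [Set.mem_setOf_eq]
  constructor
  · rintro ⟨a, haM, -, rfl⟩
    exact ⟨a, haM, rfl⟩
  · rintro ⟨a, haM, rfl⟩
    -- Basic group-representation facts
    have hU1 : U 1 = 1 := by
      have h : U 1 * U 1 = U 1 := by
        have := hU_mul 1 1; rw [mul_one] at this; exact this.symm
      have hs := (Unitary.mem_iff.mp (hU_unitary 1)).1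
      calc U 1 = 1 * U 1 := (one_mul _).symm
        _ = star (U 1) * U 1 * U 1 := by rw [hs]
        _ = star (U 1) * (U 1 * U 1) := by rw [mul_assoc]
        _ = star (U 1) * U 1 := by rw [h]
        _ = 1 := hs
    have hUinv : ∀ s : S, U s * U s⁻¹ = 1 := fun s => by
      rw [← hU_mul, mul_inv_cancel, hU1]
    have hUinv' : ∀ s : S, U s⁻¹ * U s = 1 := fun s => by
      rw [← hU_mul, inv_mul_cancel, hU1]
    have hnorm : ∀ (s : S) (ψ : H), ‖U s ψ‖ = ‖ψ‖ := fun s ψ =>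
      ContinuousLinearMap.norm_map_of_mem_unitary (hU_unitary s) ψ
    -- the conjugated operators
    set T : S → (H →L[ℂ] H) := fun s => U s * a * U s⁻¹ with hT
    have hT_apply : ∀ (s : S) (ψ : H), T s ψ = U s (a (U s⁻¹ ψ)) := fun s ψ => rfl
    -- continuity and integrability
    have hUapp : ∀ (g : S → H), Continuous g → Continuous fun s => U s (g s) := by
      intro g hg
      refine continuous_iff_continuousAt.mpr fun t => ?_
      have h0 : Filter.Tendsto (fun s => ‖U s (g s) - U t (g t)‖) (nhds t) (nhds 0) := by
        have hb : ∀ s, ‖U s (g s) - U t (g t)‖ ≤ ‖g s - g t‖ + ‖U s (g t) - U t (g t)‖ := by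
          intro s
          have hdec : U s (g s) - U t (g t) = U s (g s - g t) + (U s (g t) - U t (g t)) := by
            rw [map_sub]; abel
          rw [hdec]
          refine (norm_add_le _ _).trans ?_
          rw [hnorm]
        have t1 : Filter.Tendsto (fun s => ‖g s - g t‖ + ‖U s (g t) - U t (g t)‖)
            (nhds t) (nhds 0) := by
          have h1 : Filter.Tendsto (fun s => ‖g s - g t‖) (nhds t) (nhds 0) := by
            have h : Filter.Tendsto (fun s => g s - g t) (nhds t) (nhds (g t - g t)) :=
              (hg.tendsto t).sub tendsto_const_nhds
            simpa using h.norm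
          have h2 : Filter.Tendsto (fun s => ‖U s (g t) - U t (g t)‖) (nhds t) (nhds 0) := by
            have h : Filter.Tendsto (fun s => U s (g t) - U t (g t)) (nhds t)
                (nhds (U t (g t) - U t (g t))) :=
              ((hU_cont (g t)).tendsto t).sub tendsto_const_nhds
            simpa using h.norm
          simpa using h1.add h2
        exact squeeze_zero (fun s => norm_nonneg _) hb t1
      exact tendsto_iff_norm_sub_tendsto_zero.mpr h0
    have hT_cont : ∀ ψ : H, Continuous fun s => T s ψ := by
      intro ψ
      simp only [hT_apply]
      exact hUapp _ (a.continuous.comp ((hU_cont ψ).comp continuous_inv))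
    have hInt : ∀ ψ : H, Integrable (fun s => T s ψ) μ := fun ψ =>
      (hT_cont ψ).integrable_of_hasCompactSupport (HasCompactSupport.of_compactSpace _)
    have hIntU : ∀ ψ : H, Integrable (fun s => U s ψ) μ := fun ψ =>
      (hU_cont ψ).integrable_of_hasCompactSupport (HasCompactSupport.of_compactSpace _)
    -- the averaged operator b
    have hTnorm : ∀ (s : S) (ψ : H), ‖T s ψ‖ ≤ ‖a‖ * ‖ψ‖ := by
      intro s ψ
      rw [hT_apply, hnorm]
      refine (a.le_opNorm _).trans ?_
      rw [hnorm]
    set b : H →L[ℂ] H := LinearMap.mkContinuous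
      { toFun := fun ψ => ∫ s, T s ψ ∂μ
        map_add' := fun ψ φ => by
          simp only [map_add]
          exact integral_add (hInt ψ) (hInt φ)
        map_smul' := fun c ψ => by
          simp only [_root_.map_smul, RingHom.id_apply]
          exact integral_smul c _ }
      ‖a‖ (fun ψ => by
        refine (norm_integral_le_of_norm_le_const (C := ‖a‖ * ‖ψ‖)
          (Filter.Eventually.of_forall fun s => hTnorm s ψ)).trans ?_
        simp) with hb
    have hb_apply : ∀ ψ : H, b ψ = ∫ s, T s ψ ∂μ := fun ψ => rfl
    -- each T s lies in M
    have hTM : ∀ s : S, T s ∈ M := by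
      intro s
      obtain ⟨u, v, huM, hvM', hu, hv, huv⟩ := hfac s
      have hva : a * v = v * a := VonNeumannAlgebra.mem_commutant_iff.mp hvM' a haM
      have hvv : v * star v = 1 := (Unitary.mem_iff.mp hv).2
      have hstarUs : U s⁻¹ = star v * star u := by
        have h1 : star (U s) * U s = 1 := (Unitary.mem_iff.mp (hU_unitary s)).1
        have h2 : star (U s) = U s⁻¹ := by
          calc star (U s) = star (U s) * (U s * U s⁻¹) := by rw [hUinv, mul_one]
            _ = star (U s) * U s * U s⁻¹ := by rw [mul_assoc]
            _ = U s⁻¹ := by rw [h1, one_mul]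
        rw [← h2, huv, star_mul]
      have hkey : T s = u * a * star u := by
        show U s * a * U s⁻¹ = u * a * star u
        have hva' : v * a = a * v := hva.symm
        rw [hstarUs, huv, mul_assoc u v a, hva', ← mul_assoc u a v,
          mul_assoc (u * a) v, ← mul_assoc v (star v), hvv, one_mul]
      rw [hkey]
      exact mul_mem (mul_mem huM haM) (star_mem huM)
    -- b belongs to M by the double commutant property
    have hbM : b ∈ M := by
      have hmem : b ∈ Set.centralizer (Set.centralizer (M : Set (H →L[ℂ] H))) := by
        intro c hc
        refine ContinuousLinearMap.ext fun ψ => ?_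
        show c (b ψ) = b (c ψ)
        rw [hb_apply, hb_apply, ← ContinuousLinearMap.integral_comp_comm c (hInt ψ)]
        have hfun : ∀ s, c (T s ψ) = T s (c ψ) := by
          intro s
          have h := hc (T s) (hTM s)
          calc c (T s ψ) = (c * T s) ψ := rfl
            _ = (T s * c) ψ := by rw [← h]
            _ = T s (c ψ) := rfl
        simp only [hfun]
      rwa [M.centralizer_centralizer] at hmem
    -- b commutes with every U t
    have hbU : ∀ t : S, b * U t = U t * b := by
      intro t
      refine ContinuousLinearMap.ext fun ψ => ?_
      show b (U t ψ) = U t (b ψ)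
      rw [hb_apply, hb_apply, ← ContinuousLinearMap.integral_comp_comm (U t) (hInt ψ)]
      have key : ∀ s, U t (T s ψ) = T (t * s) (U t ψ) := by
        intro s
        have hop : U t * T s = T (t * s) * U t := by
          show U t * (U s * a * U s⁻¹) = U (t * s) * a * U (t * s)⁻¹ * U t
          rw [hU_mul t s, mul_inv_rev, hU_mul s⁻¹ t⁻¹]
          simp only [mul_assoc, hUinv' t, mul_one]
        calc U t (T s ψ) = (U t * T s) ψ := rfl
          _ = (T (t * s) * U t) ψ := by rw [hop]
          _ = T (t * s) (U t ψ) := rfl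
      calc (∫ s, T s (U t ψ) ∂μ)
          = ∫ s, T (t * s) (U t ψ) ∂μ :=
            (integral_mul_left_eq_self (fun s => T s (U t ψ)) t).symm
        _ = ∫ s, U t (T s ψ) ∂μ := by simp only [key]
    -- P absorbs the representation
    have hPU : ∀ (s : S) (ψ : H), P (U s ψ) = P ψ := by
      intro s ψ
      rw [hP, hP]
      calc (∫ t, U t (U s ψ) ∂μ)
          = ∫ t, U (t * s) ψ ∂μ := by
            simp only [hU_mul, ContinuousLinearMap.mul_apply]
        _ = ∫ t, U t ψ ∂μ := integral_mul_right_eq_self (fun t => U t ψ) s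
    have hUP : ∀ (s : S) (ψ : H), U s (P ψ) = P ψ := by
      intro s ψ
      conv_lhs => rw [hP]
      rw [← ContinuousLinearMap.integral_comp_comm (U s) (hIntU ψ)]
      calc (∫ t, U s (U t ψ) ∂μ)
          = ∫ t, U (s * t) ψ ∂μ := by
            simp only [hU_mul, ContinuousLinearMap.mul_apply]
        _ = ∫ t, U t ψ ∂μ := integral_mul_left_eq_self (fun t => U t ψ) s
        _ = P ψ := (hP ψ).symm
    -- conclusion
    refine ⟨b, hbM, hbU, ?_⟩
    refine ContinuousLinearMap.ext fun ψ => ?_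
    show P (a (P ψ)) = P (b (P ψ))
    rw [hb_apply, ← ContinuousLinearMap.integral_comp_comm P (hInt (P ψ))]
    have hfun : ∀ s, P (T s (P ψ)) = P (a (P ψ)) := by
      intro s
      rw [hT_apply, hUP s⁻¹, hPU]
    simp only [hfun]
    simp
end

section
/- Under the factorization assumption, the compressed algebras of M and of its commutant commute elementwise: for every a ∈ M and a' ∈ M', (P_S a' P_S)(P_S a P_S) = (P_S a P_S)(P_S a' P_S); equivalently, the compressions c(a) and c(a') commute as bounded operators on K = H_S. -/
open MeasureTheory

/-- Under the factorization assumption, the compressed algebras of `M`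
and of its commutant commute elementwise: for every `a ∈ M` and `a' ∈ M.commutant`,
`(P_S a' P_S)(P_S a P_S) = (P_S a P_S)(P_S a' P_S)`. -/
theorem compressed_algebras_commute
    {H : Type*} [NormedAddCommGroup H] [InnerProductSpace ℂ H] [CompleteSpace H]
    {S : Type*} [Group S] [TopologicalSpace S] [IsTopologicalGroup S]
    [CompactSpace S] [T2Space S] [MeasurableSpace S] [BorelSpace S]
    (μ : Measure S) [μ.IsHaarMeasure] [IsProbabilityMeasure μ]
    [μ.IsMulRightInvariant] [μ.IsInvInvariant]
    (U : S → (H →L[ℂ] H))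
    (hU_mul : ∀ s t : S, U (s * t) = U s * U t)
    (hU_unitary : ∀ s : S, U s ∈ unitary (H →L[ℂ] H))
    (hU_cont : ∀ ψ : H, Continuous fun s => U s ψ)
    (M : VonNeumannAlgebra H)
    (hfac : ∀ s : S, ∃ u v : H →L[ℂ] H, u ∈ M ∧ v ∈ M.commutant ∧
      u ∈ unitary (H →L[ℂ] H) ∧ v ∈ unitary (H →L[ℂ] H) ∧ U s = u * v)
    (P : H →L[ℂ] H) (hP : ∀ ψ : H, P ψ = ∫ s, U s ψ ∂μ) :
    ∀ a ∈ M, ∀ a' ∈ M.commutant,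
      (P * a' * P) * (P * a * P) = (P * a * P) * (P * a' * P) := by
  intro a ha a' ha'
  -- every continuous function on S is integrable
  have hint : ∀ g : S → H, Continuous g → Integrable g μ := fun g hg =>
    hg.integrable_of_hasCompactSupport (HasCompactSupport.of_compactSpace g)
  have hintU : ∀ ψ : H, Integrable (fun s => U s ψ) μ := fun ψ => hint _ (hU_cont ψ)
  -- U 1 = 1
  have hU1 : U 1 = 1 := by
    have h : U 1 * U 1 = U 1 * 1 := by rw [mul_one, ← hU_mul, mul_one]
    have hinv := Unitary.star_mul_self_of_mem (hU_unitary 1)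
    calc U 1 = (star (U 1) * U 1) * U 1 := by rw [hinv, one_mul]
    _ = star (U 1) * (U 1 * 1) := by rw [mul_assoc, h]
    _ = 1 := by rw [mul_one, hinv]
  have hUinv : ∀ s : S, U s * U s⁻¹ = 1 := fun s => by rw [← hU_mul, mul_inv_cancel, hU1]
  have hUinv' : ∀ s : S, U s⁻¹ * U s = 1 := fun s => by rw [← hU_mul, inv_mul_cancel, hU1]
  -- star (U s) = U s⁻¹
  have hstarU : ∀ s : S, star (U s) = U s⁻¹ := fun s => by
    calc star (U s) = star (U s) * (U s * U s⁻¹) := by rw [hUinv, mul_one]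
    _ = (star (U s) * U s) * U s⁻¹ := by rw [mul_assoc]
    _ = U s⁻¹ := by rw [Unitary.star_mul_self_of_mem (hU_unitary s), one_mul]
  -- P absorbs U on both sides
  have hPU : ∀ t : S, P * U t = P := by
    intro t; ext ψ
    have : P ((U t) ψ) = ∫ s, U (s * t) ψ ∂μ := by
      rw [hP]; congr 1; ext s; rw [hU_mul]; rfl
    simp only [ContinuousLinearMap.mul_apply, this,
      integral_mul_right_eq_self (fun s => U s ψ) t]
    rw [hP]
  have hUP : ∀ t : S, U t * P = P := by
    intro t; ext ψ
    have : (U t) (P ψ) = ∫ s, U (t * s) ψ ∂μ := by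
      rw [hP, ← ContinuousLinearMap.integral_comp_comm _ (hintU ψ)]
      congr 1; ext s; rw [hU_mul]; rfl
    simp only [ContinuousLinearMap.mul_apply, this,
      integral_mul_left_eq_self (fun s => U s ψ) t]
    rw [hP]
  -- P is idempotent
  have hPP : P * P = P := by
    ext ψ
    have : P (P ψ) = ∫ _s, P ψ ∂μ := by
      rw [hP (P ψ)]; congr 1; ext s
      have := congrFun (congrArg DFunLike.coe (hUP s)) ψ
      simpa using this
    simp only [ContinuousLinearMap.mul_apply, this, integral_const, measure_univ,
      ENNReal.toReal_one, probReal_univ, one_smul]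
  -- the core exchange identity
  have hcore : ∀ s : S, P * a * U s * a' * P = P * a' * U s⁻¹ * a * P := by
    intro s
    obtain ⟨u, v, hu, hv, huU, hvU, hfs⟩ := hfac s
    have huu : u * star u = 1 := Unitary.mul_star_self_of_mem huU
    have hsv : star v ∈ M.commutant := star_mem hv
    have hb' : v * a' * star v ∈ M.commutant := mul_mem (mul_mem hv ha') hsv
    have hcomm_u : u * (v * a' * star v) = v * a' * star v * u :=
      (VonNeumannAlgebra.mem_commutant_iff.mp hb') u hu
    have hcomm_a : a * (v * a' * star v) = v * a' * star v * a :=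
      (VonNeumannAlgebra.mem_commutant_iff.mp hb') a ha
    -- right-associated helper identities
    have hfs' : ∀ Q : H →L[ℂ] H, u * (v * Q) = U s * Q := fun Q => by
      rw [hfs, mul_assoc]
    have hsfs' : ∀ Q : H →L[ℂ] H, star v * (star u * Q) = U s⁻¹ * Q := fun Q => by
      rw [← hstarU, hfs, star_mul, mul_assoc]
    have huu' : ∀ Q : H →L[ℂ] H, u * (star u * Q) = Q := fun Q => by
      rw [← mul_assoc, huu, one_mul]
    have hXu : ∀ Q : H →L[ℂ] H,
        u * (v * (a' * (star v * Q))) = v * (a' * (star v * (u * Q))) := fun Q => by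
      calc u * (v * (a' * (star v * Q))) = u * (v * a' * star v) * Q := by
            simp only [mul_assoc]
        _ = v * a' * star v * u * Q := by rw [hcomm_u]
        _ = v * (a' * (star v * (u * Q))) := by simp only [mul_assoc]
    have hXa : ∀ Q : H →L[ℂ] H,
        a * (v * (a' * (star v * Q))) = v * (a' * (star v * (a * Q))) := fun Q => by
      calc a * (v * (a' * (star v * Q))) = a * (v * a' * star v) * Q := by
            simp only [mul_assoc]
        _ = v * a' * star v * a * Q := by rw [hcomm_a]
        _ = v * (a' * (star v * (a * Q))) := by simp only [mul_assoc]
    have hPU' : ∀ Q : H →L[ℂ] H, P * (U s * Q) = P * Q := fun Q => by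
      rw [← mul_assoc, hPU]
    have hstarP : star v * (star u * P) = P := by
      rw [hsfs', hUP]
    calc P * a * U s * a' * P
        = P * (a * (U s * (a' * P))) := by simp only [mul_assoc]
      _ = P * (a * (u * (v * (a' * P)))) := by rw [hfs']
      _ = P * (a * (u * (v * (a' * (star v * (star u * P)))))) := by rw [hstarP]
      _ = P * (a * (v * (a' * (star v * (u * (star u * P)))))) := by rw [hXu]
      _ = P * (a * (v * (a' * (star v * P)))) := by rw [huu']
      _ = P * (v * (a' * (star v * (a * P)))) := by rw [hXa]
      _ = P * (v * (a' * (star v * (u * (star u * (a * P)))))) := by rw [huu']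
      _ = P * (u * (v * (a' * (star v * (star u * (a * P)))))) := by rw [hXu]
      _ = P * (u * (v * (a' * (U s⁻¹ * (a * P))))) := by rw [hsfs']
      _ = P * (U s * (a' * (U s⁻¹ * (a * P)))) := by rw [hfs']
      _ = P * (a' * (U s⁻¹ * (a * P))) := by rw [hPU']
      _ = P * a' * U s⁻¹ * a * P := by simp only [mul_assoc]
  -- expressing the triple products as integrals
  have hexp : ∀ b b' : H →L[ℂ] H, ∀ ψ : H,
      (P * b * P * b' * P) ψ = ∫ s, (P * b * U s * b' * P) ψ ∂μ := by
    intro b b' ψ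
    have h1 : (P * b * P * b' * P) ψ = P (b (P (b' (P ψ)))) := rfl
    have h2 : P (b' (P ψ)) = ∫ s, U s (b' (P ψ)) ∂μ := hP _
    have hcont : Continuous fun s => b (U s (b' (P ψ))) :=
      b.continuous.comp (hU_cont (b' (P ψ)))
    have h3 : b (∫ s, U s (b' (P ψ)) ∂μ) = ∫ s, b (U s (b' (P ψ))) ∂μ :=
      (ContinuousLinearMap.integral_comp_comm b (hintU _)).symm
    have h4 : P (∫ s, b (U s (b' (P ψ))) ∂μ) = ∫ s, P (b (U s (b' (P ψ)))) ∂μ :=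
      (ContinuousLinearMap.integral_comp_comm P (hint _ hcont)).symm
    rw [h1, h2, h3, h4]
    rfl
  -- reduce to the five-fold products
  have key : P * a' * P * a * P = P * a * P * a' * P := by
    ext ψ
    rw [hexp a' a ψ, hexp a a' ψ]
    have h1 : ∀ s, (P * a * U s * a' * P) ψ = (P * a' * U s⁻¹ * a * P) ψ := fun s => by
      rw [hcore s]
    simp only [h1]
    exact (integral_inv_eq_self (fun s => (P * a' * U s * a * P) ψ) μ).symm
  calc (P * a' * P) * (P * a * P)
      = P * a' * (P * P) * a * P := by simp only [mul_assoc]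
    _ = P * a' * P * a * P := by rw [hPP]
    _ = P * a * P * a' * P := key
    _ = P * a * (P * P) * a' * P := by rw [hPP]
    _ = (P * a * P) * (P * a' * P) := by simp only [mul_assoc]
end

section
/- Factorization of the group average over a product group: let O₁ and O₂ be bounded operators on H such that U(1, s₂, x) commutes with O₁ for all s₂ ∈ S₂ and x ∈ N, and U(s₁, 1, x) commutes with O₂ for all s₁ ∈ S₁ and x ∈ N. Then (O₁ O₂)_S = (O₁)_S (O₂)_S. -/
open MeasureTheory

/-- If `V a` is pointwise isometric and strongly continuous, then `a ↦ V a (f a)` is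
continuous for continuous `f`. -/
lemma aux_cont_apply {H α : Type*} [NormedAddCommGroup H] [NormedSpace ℂ H]
    [TopologicalSpace α] (V : α → (H →L[ℂ] H))
    (hnorm : ∀ a ψ, ‖V a ψ‖ = ‖ψ‖)
    (hcont : ∀ ψ : H, Continuous fun a => V a ψ)
    {f : α → H} (hf : Continuous f) :
    Continuous fun a => V a (f a) := by
  rw [continuous_iff_continuousAt]
  intro a₀
  have h1 : Filter.Tendsto (fun a => V a (f a) - V a (f a₀)) (nhds a₀) (nhds 0) := by
    have hle : ∀ a, ‖V a (f a) - V a (f a₀)‖ ≤ ‖f a - f a₀‖ := by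
      intro a
      rw [← map_sub, hnorm]
    have htend : Filter.Tendsto (fun a => ‖f a - f a₀‖) (nhds a₀) (nhds 0) := by
      have : Filter.Tendsto (fun a => f a - f a₀) (nhds a₀) (nhds (f a₀ - f a₀)) :=
        ((hf.sub continuous_const).tendsto a₀)
      simpa using this.norm
    exact squeeze_zero_norm hle htend
  have h2 : Filter.Tendsto (fun a => V a (f a₀)) (nhds a₀) (nhds (V a₀ (f a₀))) :=
    (hcont (f a₀)).tendsto a₀
  have h3 := h1.add h2
  rw [zero_add] at h3
  have he : (fun a => (V a (f a) - V a (f a₀)) + V a (f a₀)) = fun a => V a (f a) := by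
    funext a; abel
  rw [he] at h3
  exact h3

/-- Factorization of the group average over a product group
`S = S₁ × S₂ × N`: if `U (1, s₂, x)` commutes with `O₁` for all `s₂, x`, and
`U (s₁, 1, x)` commutes with `O₂` for all `s₁, x`, then `(O₁ O₂)_S = (O₁)_S (O₂)_S`. -/
theorem group_average_factorizes
    {H : Type*} [NormedAddCommGroup H] [InnerProductSpace ℂ H] [CompleteSpace H]
    {S₁ S₂ N : Type*}
    [Group S₁] [TopologicalSpace S₁] [IsTopologicalGroup S₁] [CompactSpace S₁] [T2Space S₁]
    [Group S₂] [TopologicalSpace S₂] [IsTopologicalGroup S₂] [CompactSpace S₂] [T2Space S₂]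
    [Group N] [TopologicalSpace N] [IsTopologicalGroup N] [CompactSpace N] [T2Space N]
    [MeasurableSpace (S₁ × S₂ × N)] [BorelSpace (S₁ × S₂ × N)]
    (μ : Measure (S₁ × S₂ × N)) [μ.IsHaarMeasure] [IsProbabilityMeasure μ]
    [μ.IsMulRightInvariant] [μ.IsInvInvariant]
    (U : S₁ × S₂ × N → (H →L[ℂ] H))
    (hU_mul : ∀ s t : S₁ × S₂ × N, U (s * t) = U s * U t)
    (hU_unitary : ∀ s : S₁ × S₂ × N, U s ∈ unitary (H →L[ℂ] H))
    (hU_cont : ∀ ψ : H, Continuous fun s => U s ψ)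
    (O₁ O₂ : H →L[ℂ] H)
    (hO₁ : ∀ (s₂ : S₂) (x : N), U (1, s₂, x) * O₁ = O₁ * U (1, s₂, x))
    (hO₂ : ∀ (s₁ : S₁) (x : N), U (s₁, 1, x) * O₂ = O₂ * U (s₁, 1, x))
    (A A₁ A₂ : H →L[ℂ] H)
    (hA : ∀ ψ : H, A ψ = ∫ s, U s ((O₁ * O₂) (U s⁻¹ ψ)) ∂μ)
    (hA₁ : ∀ ψ : H, A₁ ψ = ∫ s, U s (O₁ (U s⁻¹ ψ)) ∂μ)
    (hA₂ : ∀ ψ : H, A₂ ψ = ∫ s, U s (O₂ (U s⁻¹ ψ)) ∂μ) :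
    A = A₁ * A₂ := by
  -- basic facts about U
  have hnorm : ∀ (s : S₁ × S₂ × N) (ψ : H), ‖U s ψ‖ = ‖ψ‖ := fun s ψ =>
    ContinuousLinearMap.norm_map_of_mem_unitary (hU_unitary s) ψ
  have hU1 : U 1 = 1 := by
    have h := hU_mul 1 1
    rw [mul_one] at h
    have hst : star (U 1) * U 1 = 1 := Unitary.star_mul_self_of_mem (hU_unitary 1)
    calc U 1 = (star (U 1) * U 1) * U 1 := by rw [hst, one_mul]
      _ = star (U 1) * (U 1 * U 1) := by rw [mul_assoc]
      _ = star (U 1) * U 1 := by rw [← h]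
      _ = 1 := hst
  have happ : ∀ (a b : S₁ × S₂ × N) (ψ : H), U a (U b ψ) = U (a * b) ψ := by
    intro a b ψ
    rw [hU_mul a b]
    rfl
  -- integrability of continuous functions
  haveI : IsFiniteMeasureOnCompacts μ := ⟨fun K _ => measure_lt_top μ K⟩
  have hint : ∀ f : S₁ × S₂ × N → H, Continuous f → Integrable f μ := fun f hf =>
    hf.integrable_of_hasCompactSupport ((isClosed_tsupport f).isCompact)
  have hcontF : ∀ (B : H →L[ℂ] H) (φ : H),
      Continuous fun s : S₁ × S₂ × N => U s (B (U s⁻¹ φ)) := by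
    intro B φ
    have hin : Continuous fun s : S₁ × S₂ × N => B (U s⁻¹ φ) := by
      have : Continuous fun s : S₁ × S₂ × N => U s⁻¹ φ :=
        (hU_cont φ).comp continuous_inv
      exact B.continuous.comp this
    exact aux_cont_apply U hnorm hU_cont hin
  -- A₂ commutes with every U v
  have hcomm2 : ∀ (v : S₁ × S₂ × N) (φ : H), A₂ (U v φ) = U v (A₂ φ) := by
    intro v φ
    rw [hA₂ (U v φ)]
    calc ∫ s, U s (O₂ (U s⁻¹ (U v φ))) ∂μ
        = ∫ s, U (v * s) (O₂ (U (v * s)⁻¹ (U v φ))) ∂μ :=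
          (integral_mul_left_eq_self (fun s => U s (O₂ (U s⁻¹ (U v φ)))) v).symm
      _ = ∫ s, U v (U s (O₂ (U s⁻¹ φ))) ∂μ := by
          apply integral_congr_ae
          filter_upwards with s
          rw [happ v s]
          congr 2
          rw [happ]
          congr 1
          group
      _ = U v (∫ s, U s (O₂ (U s⁻¹ φ)) ∂μ) :=
          (U v).integral_comp_comm (hint _ (hcontF O₂ φ))
      _ = U v (A₂ φ) := by rw [hA₂]
  -- the projection onto the S₂ copy
  set σ : S₁ × S₂ × N → S₁ × S₂ × N := fun t => ((1 : S₁), t.2.1, (1 : N)) with hσ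
  have hσ_cont : Continuous σ := by
    rw [hσ]; fun_prop
  -- key pointwise identities
  have hK1 : ∀ (t : S₁ × S₂ × N) (χ : H),
      U t (O₂ (U t⁻¹ χ)) = U (σ t) (O₂ (U (σ t)⁻¹ χ)) := by
    rintro ⟨t₁, t₂, x⟩ χ
    have hτO₂ : ∀ w : H, U (t₁, 1, x) (O₂ w) = O₂ (U (t₁, 1, x) w) := by
      intro w
      have h := congrArg (fun T : H →L[ℂ] H => T w) (hO₂ t₁ x)
      simpa using h
    have hts : ((1 : S₁), t₂, (1 : N)) * ((t₁ : S₁), (1 : S₂), x) = (t₁, t₂, x) := by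
      simp [Prod.ext_iff]
    have htsinv : ((t₁ : S₁), (1 : S₂), x)⁻¹ * ((1 : S₁), t₂, (1 : N))⁻¹
        = ((t₁ : S₁), t₂, x)⁻¹ := by
      rw [← mul_inv_rev, hts]
    calc U (t₁, t₂, x) (O₂ (U (t₁, t₂, x)⁻¹ χ))
        = U (((1:S₁), t₂, (1:N)) * ((t₁:S₁), (1:S₂), x))
            (O₂ (U (((t₁:S₁), (1:S₂), x)⁻¹ * ((1:S₁), t₂, (1:N))⁻¹) χ)) := by
          rw [hts, htsinv]
      _ = U ((1:S₁), t₂, (1:N)) (U ((t₁:S₁), (1:S₂), x)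
            (O₂ (U ((t₁:S₁), (1:S₂), x)⁻¹ (U ((1:S₁), t₂, (1:N))⁻¹ χ)))) := by
          rw [happ, happ]
      _ = U ((1:S₁), t₂, (1:N)) (O₂ (U ((1:S₁), t₂, (1:N))⁻¹ χ)) := by
          rw [hτO₂, happ, mul_inv_cancel, hU1]
          rfl
      _ = U (σ (t₁, t₂, x)) (O₂ (U (σ (t₁, t₂, x))⁻¹ χ)) := rfl
  have hK2 : ∀ (t : S₁ × S₂ × N) (χ : H), O₁ (U (σ t) χ) = U (σ t) (O₁ χ) := by
    intro t χ
    have h := congrArg (fun T : H →L[ℂ] H => T χ) (hO₁ t.2.1 1)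
    simpa using h.symm
  have key : ∀ (s t : S₁ × S₂ × N) (χ : H),
      U s (O₁ (U t (O₂ (U t⁻¹ (U s⁻¹ χ))))) =
        U (s * σ t) ((O₁ * O₂) (U (s * σ t)⁻¹ χ)) := by
    intro s t χ
    rw [hK1 t (U s⁻¹ χ), hK2, happ]
    congr 1
    rw [ContinuousLinearMap.mul_apply]
    congr 1
    rw [happ]
    congr 1
    group
  -- the main computation
  ext ψ
  rw [ContinuousLinearMap.mul_apply]
  set Gf : S₁ × S₂ × N → H := fun r => U r ((O₁ * O₂) (U r⁻¹ ψ)) with hGf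
  have hGf_cont : Continuous Gf := hcontF (O₁ * O₂) ψ
  calc A ψ = ∫ s, Gf s ∂μ := hA ψ
    _ = ∫ _t, (∫ s, Gf s ∂μ) ∂μ := by
        rw [integral_const]
        simp
    _ = ∫ t, (∫ s, Gf (s * σ t) ∂μ) ∂μ := by
        apply integral_congr_ae
        filter_upwards with t
        exact (integral_mul_right_eq_self Gf (σ t)).symm
    _ = ∫ s, (∫ t, Gf (s * σ t) ∂μ) ∂μ := by
        apply (integral_integral_swap_of_hasCompactSupport ?_ ?_).symm
        · exact hGf_cont.comp (continuous_fst.mul (hσ_cont.comp continuous_snd))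
        · exact (isClosed_tsupport _).isCompact
    _ = ∫ s, U s (O₁ (A₂ (U s⁻¹ ψ))) ∂μ := by
        apply integral_congr_ae
        filter_upwards with s
        have i0 : Integrable (fun t => U t (O₂ (U t⁻¹ (U s⁻¹ ψ)))) μ :=
          hint _ (hcontF O₂ (U s⁻¹ ψ))
        have i1 : Integrable (fun t => O₁ (U t (O₂ (U t⁻¹ (U s⁻¹ ψ))))) μ :=
          O₁.integrable_comp i0
        have e1 : ∫ t, Gf (s * σ t) ∂μ
            = ∫ t, U s (O₁ (U t (O₂ (U t⁻¹ (U s⁻¹ ψ))))) ∂μ := by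
          apply integral_congr_ae
          filter_upwards with t
          exact (key s t ψ).symm
        have e3 : ∫ t, U s (O₁ (U t (O₂ (U t⁻¹ (U s⁻¹ ψ))))) ∂μ
            = U s (∫ t, O₁ (U t (O₂ (U t⁻¹ (U s⁻¹ ψ)))) ∂μ) :=
          (U s).integral_comp_comm i1
        have e2 : ∫ t, O₁ (U t (O₂ (U t⁻¹ (U s⁻¹ ψ)))) ∂μ
            = O₁ (∫ t, U t (O₂ (U t⁻¹ (U s⁻¹ ψ))) ∂μ) :=
          O₁.integral_comp_comm i0
        rw [e1, e3, e2, ← hA₂ (U s⁻¹ ψ)]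
    _ = ∫ s, U s (O₁ (U s⁻¹ (A₂ ψ))) ∂μ := by
        apply integral_congr_ae
        filter_upwards with s
        rw [hcomm2 s⁻¹ ψ]
    _ = A₁ (A₂ ψ) := (hA₁ (A₂ ψ)).symm
end

section
/- Factorization of the compressed product over a product group: let O₁ and O₂ be bounded operators on H such that U(1, s₂, x) commutes with O₁ for all s₂ ∈ S₂ and x ∈ N, and U(s₁, 1, x) commutes with O₂ for all s₁ ∈ S₁ and x ∈ N. Then P_S (O₁ O₂) P_S = (P_S O₁ P_S)(P_S O₂ P_S). -/
open MeasureTheory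

/-- Factorization of the compressed product over a product group
`S = S₁ × S₂ × N`: under the same commutation hypotheses as for the factorization
of the group average, `P_S (O₁ O₂) P_S = (P_S O₁ P_S)(P_S O₂ P_S)`. -/
theorem compressed_product_factorizes
    {H : Type*} [NormedAddCommGroup H] [InnerProductSpace ℂ H] [CompleteSpace H]
    {S₁ S₂ N : Type*}
    [Group S₁] [TopologicalSpace S₁] [IsTopologicalGroup S₁] [CompactSpace S₁] [T2Space S₁]
    [Group S₂] [TopologicalSpace S₂] [IsTopologicalGroup S₂] [CompactSpace S₂] [T2Space S₂]
    [Group N] [TopologicalSpace N] [IsTopologicalGroup N] [CompactSpace N] [T2Space N]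
    [MeasurableSpace (S₁ × S₂ × N)] [BorelSpace (S₁ × S₂ × N)]
    (μ : Measure (S₁ × S₂ × N)) [μ.IsHaarMeasure] [IsProbabilityMeasure μ]
    [μ.IsMulRightInvariant] [μ.IsInvInvariant]
    (U : S₁ × S₂ × N → (H →L[ℂ] H))
    (hU_mul : ∀ s t : S₁ × S₂ × N, U (s * t) = U s * U t)
    (hU_unitary : ∀ s : S₁ × S₂ × N, U s ∈ unitary (H →L[ℂ] H))
    (hU_cont : ∀ ψ : H, Continuous fun s => U s ψ)
    (O₁ O₂ : H →L[ℂ] H)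
    (hO₁ : ∀ (s₂ : S₂) (x : N), U (1, s₂, x) * O₁ = O₁ * U (1, s₂, x))
    (hO₂ : ∀ (s₁ : S₁) (x : N), U (s₁, 1, x) * O₂ = O₂ * U (s₁, 1, x))
    (P : H →L[ℂ] H) (hP : ∀ ψ : H, P ψ = ∫ s, U s ψ ∂μ) :
    P * (O₁ * O₂) * P = (P * O₁ * P) * (P * O₂ * P) := by
  -- integrability of the orbit maps
  have hInt : ∀ ψ : H, Integrable (fun s => U s ψ) μ := by
    intro ψ
    exact (hU_cont ψ).integrable_of_hasCompactSupport
      (IsCompact.of_isClosed_subset isCompact_univ (isClosed_tsupport _) (Set.subset_univ _))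
  -- P ∘ T commutes with the integral
  have hPcomm : ∀ (T : H →L[ℂ] H) (f : (S₁ × S₂ × N) → H), Integrable f μ →
      T (∫ s, f s ∂μ) = ∫ s, T (f s) ∂μ := fun T f hf =>
    (ContinuousLinearMap.integral_comp_comm T hf).symm
  -- U t ∘ P = P
  have hUP : ∀ (t : S₁ × S₂ × N) (ψ : H), U t (P ψ) = P ψ := by
    intro t ψ
    rw [hP, hPcomm (U t) _ (hInt ψ)]
    calc ∫ s, U t (U s ψ) ∂μ = ∫ s, U (t * s) ψ ∂μ := by
          simp only [hU_mul]; rfl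
      _ = ∫ s, U s ψ ∂μ := integral_mul_left_eq_self (fun s => U s ψ) t
  -- P ∘ U t = P
  have hPU : ∀ (t : S₁ × S₂ × N) (ψ : H), P (U t ψ) = P ψ := by
    intro t ψ
    rw [hP, hP]
    calc ∫ s, U s (U t ψ) ∂μ = ∫ s, U (s * t) ψ ∂μ := by
          simp only [hU_mul]; rfl
      _ = ∫ s, U s ψ ∂μ := integral_mul_right_eq_self (fun s => U s ψ) t
  -- P is idempotent
  have hPP : ∀ ψ : H, P (P ψ) = P ψ := by
    intro ψ
    rw [hP (P ψ)]
    have : ∀ s : S₁ × S₂ × N, U s (P ψ) = P ψ := fun s => hUP s ψ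
    simp only [this]
    simp
  -- key pointwise identity
  have hKey : ∀ (s : S₁ × S₂ × N) (ψ : H),
      P (O₁ (U s (O₂ (P ψ)))) = P (O₁ (O₂ (P ψ))) := by
    rintro ⟨s₁, s₂, x⟩ ψ
    have hsplit : (s₁, s₂, x) = ((1 : S₁), s₂, (1 : N)) * (s₁, (1 : S₂), x) := by
      simp [Prod.ext_iff]
    have h1 : U (s₁, s₂, x) (O₂ (P ψ)) =
        U (1, s₂, 1) (U (s₁, 1, x) (O₂ (P ψ))) := by
      rw [hsplit, hU_mul]; rfl
    have h2 : U (s₁, 1, x) (O₂ (P ψ)) = O₂ (U (s₁, 1, x) (P ψ)) := by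
      have := congrArg (fun T : H →L[ℂ] H => T (P ψ)) (hO₂ s₁ x)
      simpa using this
    have h3 : O₁ (U (1, s₂, 1) (O₂ (P ψ))) = U (1, s₂, 1) (O₁ (O₂ (P ψ))) := by
      have := congrArg (fun T : H →L[ℂ] H => T (O₂ (P ψ))) (hO₁ s₂ 1)
      simpa using this.symm
    rw [h1, h2, hUP (s₁, 1, x) ψ, h3, hPU]
  -- assemble
  ext ψ
  simp only [ContinuousLinearMap.mul_apply]
  rw [hPP (O₂ (P ψ))]
  conv_rhs => rw [hP (O₂ (P ψ))]
  have hInt2 : Integrable (fun s => U s (O₂ (P ψ))) μ := hInt _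
  rw [hPcomm O₁ _ hInt2, hPcomm P _ (O₁.integrable_comp hInt2)]
  simp only [hKey]
  simp
end

section
/- Disjoint additivity for lattice systems with a product constraint group: let M₁ and M₂ be von Neumann algebras on H such that every element of M₁ commutes with every element of M₂, and suppose that U(s₁,1,1) commutes with every element of M₂, U(1,s₂,1) commutes with every element of M₁, and U(1,1,x) commutes with every element of M₁ and of M₂, for all s₁ ∈ S₁, s₂ ∈ S₂, x ∈ N. Let K = H_S be the range of P_S and let c denote compression to K. Then, within the bounded operators on K, the double commutant of {c(T) : T ∈ (M₁ ∪ M₂)''} equals the double commutant of {c(a) : a ∈ M₁} ∪ {c(b) : b ∈ M₂}, where (M₁ ∪ M₂)'' denotes the double commutant of M₁ ∪ M₂ in B(H). -/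
open MeasureTheory

noncomputable section

set_option linter.unusedSectionVars false

theorem eq_orthogonalProjection_of_mem_of_inner_eq_zero {H : Type*} [NormedAddCommGroup H]
    [InnerProductSpace ℂ H] {K : Submodule ℂ H} [K.HasOrthogonalProjection] {u v : H}
    (hvm : v ∈ K) (hvo : ∀ w ∈ K, inner ℂ (u - v) w = 0) :
    (K.orthogonalProjectionOnto u : H) = v :=
  Submodule.eq_starProjection_of_mem_of_inner_eq_zero hvm hvo

theorem sub_orthogonalProjection_mem_orthogonal {H : Type*} [NormedAddCommGroup H]
    [InnerProductSpace ℂ H] {K : Submodule ℂ H} [K.HasOrthogonalProjection] (v : H) :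
    v - (K.orthogonalProjectionOnto v : H) ∈ Kᗮ :=
  Submodule.sub_starProjection_mem_orthogonal v

theorem inner_orthogonalProjection_left_eq_right {H : Type*} [NormedAddCommGroup H]
    [InnerProductSpace ℂ H] (K : Submodule ℂ H) [K.HasOrthogonalProjection] (u v : H) :
    inner ℂ (K.orthogonalProjectionOnto u : H) v = inner ℂ u (K.orthogonalProjectionOnto v : H) :=
  Submodule.inner_starProjection_left_eq_right K u v

namespace DisjointAdditivityAux

open ContinuousLinearMap

local notation "⟪" x ", " y "⟫" => @inner ℂ _ _ x y

variable {H : Type*} [NormedAddCommGroup H] [InnerProductSpace ℂ H]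


/-- The joint fixed space of a family of operators indexed by a set. -/
def fixedSpace {G : Type*} (U : G → (H →L[ℂ] H)) (T : Set G) : Submodule ℂ H where
  carrier := {ψ : H | ∀ g ∈ T, U g ψ = ψ}
  add_mem' := by
    intro a b ha hb g hg
    rw [map_add, ha g hg, hb g hg]
  zero_mem' := by
    intro g hg
    exact map_zero _
  smul_mem' := by
    intro r ψ hψ g hg
    rw [_root_.map_smul, hψ g hg]

lemma mem_fixedSpace {G : Type*} {U : G → (H →L[ℂ] H)} {T : Set G} {ψ : H} :
    ψ ∈ fixedSpace U T ↔ ∀ g ∈ T, U g ψ = ψ := Iff.rfl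

lemma isClosed_fixedSpace {G : Type*} (U : G → (H →L[ℂ] H)) (T : Set G) :
    IsClosed ((fixedSpace U T : Submodule ℂ H) : Set H) := by
  have : ((fixedSpace U T : Submodule ℂ H) : Set H) = ⋂ g ∈ T, {ψ : H | U g ψ = ψ} := by
    ext ψ
    simp [mem_fixedSpace, Set.mem_iInter]
  rw [this]
  exact isClosed_biInter fun g _ => isClosed_eq (U g).continuous continuous_id

/-- An orthogonal projection commutes with any operator that leaves the subspace invariant
and whose adjoint leaves the subspace invariant. -/
theorem proj_comm [CompleteSpace H] (L : Submodule ℂ H) [L.HasOrthogonalProjection]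
    (A : H →L[ℂ] H) (h1 : ∀ v ∈ L, A v ∈ L)
    (h2 : ∀ v ∈ L, ContinuousLinearMap.adjoint A v ∈ L) (ψ : H) :
    (L.orthogonalProjectionOnto (A ψ) : H) = A (L.orthogonalProjectionOnto ψ) := by
  apply eq_orthogonalProjection_of_mem_of_inner_eq_zero
  · exact h1 _ (L.orthogonalProjectionOnto ψ).2
  · intro w hw
    have h0 : A ψ - A (L.orthogonalProjectionOnto ψ) = A (ψ - L.orthogonalProjectionOnto ψ) := by
      rw [map_sub]
    rw [h0, ← ContinuousLinearMap.adjoint_inner_right]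
    exact (Submodule.mem_orthogonal' _ _).1
      (sub_orthogonalProjection_mem_orthogonal (K := L) ψ) _ (h2 w hw)


section Density


variable [CompleteSpace H]

/-- Diagonal amplification of an operator to `WithLp 2 (H × H)`. -/
def damp (w : H →L[ℂ] H) : WithLp 2 (H × H) →L[ℂ] WithLp 2 (H × H) :=
  ((WithLp.prodContinuousLinearEquiv 2 ℂ H H).symm.toContinuousLinearMap).comp
    ((w.prodMap w).comp (WithLp.prodContinuousLinearEquiv 2 ℂ H H).toContinuousLinearMap)

lemma damp_apply (w : H →L[ℂ] H) (v : WithLp 2 (H × H)) :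
    damp w v = (WithLp.prodContinuousLinearEquiv 2 ℂ H H).symm
      (w ((WithLp.prodContinuousLinearEquiv 2 ℂ H H) v).1,
       w ((WithLp.prodContinuousLinearEquiv 2 ℂ H H) v).2) := rfl

lemma damp_add (w w' : H →L[ℂ] H) : damp (w + w') = damp w + damp w' := by
  ext v
  have : (w + w').prodMap (w + w') = w.prodMap w + w'.prodMap w' := by
    ext u <;> simp [Prod.map]
  simp [damp, this]

lemma damp_smul (r : ℂ) (w : H →L[ℂ] H) : damp (r • w) = r • damp w := by
  ext v
  have : (r • w).prodMap (r • w) = r • (w.prodMap w) := by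
    ext u <;> simp [Prod.map]
  simp [damp, this]

lemma damp_mul_apply (w w' : H →L[ℂ] H) (v : WithLp 2 (H × H)) :
    damp (w * w') v = damp w (damp w' v) := by
  simp [damp_apply]

lemma damp_one (v : WithLp 2 (H × H)) : damp 1 v = v := by
  simp [damp_apply]
  rfl

lemma damp_fst (w : H →L[ℂ] H) (v : WithLp 2 (H × H)) : (damp w v).ofLp.1 = w v.ofLp.1 := rfl

lemma damp_snd (w : H →L[ℂ] H) (v : WithLp 2 (H × H)) : (damp w v).ofLp.2 = w v.ofLp.2 := rfl

lemma damp_adjoint (w : H →L[ℂ] H) :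
    ContinuousLinearMap.adjoint (damp w) = damp (star w) := by
  refine (((ContinuousLinearMap.eq_adjoint_iff (damp (star w)) (damp w)).mpr ?_)).symm
  intro x y
  rw [WithLp.prod_inner_apply, WithLp.prod_inner_apply, damp_fst, damp_snd, damp_fst, damp_snd,
    ContinuousLinearMap.star_eq_adjoint, ContinuousLinearMap.adjoint_inner_left,
    ContinuousLinearMap.adjoint_inner_left]

/-- Two-vector von Neumann density: for a unital star-closed subalgebra `A` (given as a
submodule closed under multiplication and star) and `T` in the double centralizer of `A`,
the pair `(T ψ₁, T ψ₂)` lies in the closure of `{(w ψ₁, w ψ₂) : w ∈ A}`. -/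
theorem two_vector_density (A : Submodule ℂ (H →L[ℂ] H)) (h1 : (1 : H →L[ℂ] H) ∈ A)
    (hmul : ∀ w ∈ A, ∀ w' ∈ A, w * w' ∈ A) (hstar : ∀ w ∈ A, star w ∈ A)
    (T : H →L[ℂ] H) (hT : T ∈ Set.centralizer (Set.centralizer (A : Set (H →L[ℂ] H))))
    (ψ₁ ψ₂ : H) :
    (T ψ₁, T ψ₂) ∈ closure {z : H × H | ∃ w ∈ A, z = (w ψ₁, w ψ₂)} := by
  set Φ := WithLp.prodContinuousLinearEquiv 2 ℂ H H with hΦ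
  set ψh : WithLp 2 (H × H) := Φ.symm (ψ₁, ψ₂) with hψh
  -- the A-orbit of ψh as a submodule
  let ev : (H →L[ℂ] H) →ₗ[ℂ] WithLp 2 (H × H) :=
    { toFun := fun w => damp w ψh
      map_add' := fun w w' => by show damp (w + w') ψh = damp w ψh + damp w' ψh; rw [damp_add]; rfl
      map_smul' := fun r w => by show damp (r • w) ψh = r • damp w ψh; rw [damp_smul]; rfl }
  have hev : ∀ w, ev w = damp w ψh := fun _ => rfl
  set L : Submodule ℂ (WithLp 2 (H × H)) := (Submodule.map ev A).topologicalClosure with hLdef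
  haveI : CompleteSpace L := (Submodule.isClosed_topologicalClosure _).completeSpace_coe
  -- invariance of L under damp w for w ∈ A
  have hinv : ∀ w ∈ A, ∀ v ∈ L, damp w v ∈ L := by
    intro w hw
    have hsub : Submodule.map ev A ≤ L.comap (damp w).toLinearMap := by
      rintro _ ⟨w', hw', rfl⟩
      refine Submodule.mem_comap.mpr (Submodule.le_topologicalClosure _ ?_)
      refine ⟨w * w', hmul w hw w' hw', ?_⟩
      rw [hev, hev, damp_mul_apply]
      rfl
    have hclosed : IsClosed ((L.comap (damp w).toLinearMap : Submodule ℂ (WithLp 2 (H × H))) :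
        Set (WithLp 2 (H × H))) :=
      IsClosed.preimage (damp w).continuous (Submodule.isClosed_topologicalClosure _)
    have := Submodule.topologicalClosure_minimal _ hsub hclosed
    intro v hv
    exact Submodule.mem_comap.mp (this hv)
  have hinv' : ∀ w ∈ A, ∀ v ∈ L, ContinuousLinearMap.adjoint (damp w) v ∈ L := by
    intro w hw v hv
    rw [damp_adjoint]
    exact hinv (star w) (hstar w hw) v hv
  -- the projection onto L commutes with damp w for w ∈ A, as an operator
  set E : WithLp 2 (H × H) →L[ℂ] WithLp 2 (H × H) := L.subtypeL.comp (L.orthogonalProjectionOnto)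
    with hEdef
  have hE_apply : ∀ v, E v = (L.orthogonalProjectionOnto v : WithLp 2 (H × H)) := fun _ => rfl
  have hEcomm : ∀ w ∈ A, ∀ v, E (damp w v) = damp w (E v) := by
    intro w hw v
    rw [hE_apply, hE_apply]
    exact proj_comm L (damp w) (hinv w hw) (hinv' w hw) v
  -- components
  set π₁ : WithLp 2 (H × H) →L[ℂ] H :=
    (ContinuousLinearMap.fst ℂ H H).comp Φ.toContinuousLinearMap with hπ₁def
  set π₂ : WithLp 2 (H × H) →L[ℂ] H :=
    (ContinuousLinearMap.snd ℂ H H).comp Φ.toContinuousLinearMap with hπ₂def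
  set ι₁ : H →L[ℂ] WithLp 2 (H × H) :=
    Φ.symm.toContinuousLinearMap.comp (ContinuousLinearMap.inl ℂ H H) with hι₁def
  set ι₂ : H →L[ℂ] WithLp 2 (H × H) :=
    Φ.symm.toContinuousLinearMap.comp (ContinuousLinearMap.inr ℂ H H) with hι₂def
  have hπ1 : ∀ (w : H →L[ℂ] H) v, π₁ (damp w v) = w (π₁ v) := fun w v => rfl
  have hπ2 : ∀ (w : H →L[ℂ] H) v, π₂ (damp w v) = w (π₂ v) := fun w v => rfl
  have hι1 : ∀ (w : H →L[ℂ] H) u, damp w (ι₁ u) = ι₁ (w u) := by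
    intro w u
    have : damp w (ι₁ u) = Φ.symm (w u, w 0) := rfl
    rw [this, map_zero]
    rfl
  have hι2 : ∀ (w : H →L[ℂ] H) u, damp w (ι₂ u) = ι₂ (w u) := by
    intro w u
    have : damp w (ι₂ u) = Φ.symm (w 0, w u) := rfl
    rw [this, map_zero]
    rfl
  have hident : ∀ v : WithLp 2 (H × H), ι₁ (π₁ v) + ι₂ (π₂ v) = v := by
    intro v
    show Φ.symm ((Φ v).1, 0) + Φ.symm (0, (Φ v).2) = v
    rw [← map_add, Prod.mk_add_mk, add_zero, zero_add]
    exact Φ.symm_apply_apply v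
  -- matrix components of E
  set Y : Fin 2 → Fin 2 → (H →L[ℂ] H) := fun i j =>
    ((if i = 0 then π₁ else π₂).comp E).comp (if j = 0 then ι₁ else ι₂) with hY
  have hYmem : ∀ i j, Y i j ∈ Set.centralizer (A : Set (H →L[ℂ] H)) := by
    intro i j
    rw [Set.mem_centralizer_iff]
    intro w hw
    ext u
    have hπ : ∀ v, (if i = 0 then π₁ else π₂) (damp w v)
        = w ((if i = 0 then π₁ else π₂) v) := by
      rcases Nat.eq_zero_or_pos i with h | h <;> intro v
      · simp only [Fin.ext_iff] at *
        simp only [h, if_pos rfl] at *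
        exact hπ1 w v
      · have : ¬ (i = 0) := by
          intro hc
          rw [hc] at h
          simp at h
        simp only [this, if_neg] at *
        exact hπ2 w v
    have hι : ∀ u, damp w ((if j = 0 then ι₁ else ι₂) u)
        = (if j = 0 then ι₁ else ι₂) (w u) := by
      by_cases h : j = 0 <;> intro u
      · simp only [h, if_pos rfl]
        exact hι1 w u
      · simp only [h, if_neg]
        exact hι2 w u
    show w (Y i j u) = Y i j (w u)
    calc w (Y i j u)
        = w ((if i = 0 then π₁ else π₂) (E ((if j = 0 then ι₁ else ι₂) u))) := rfl
      _ = (if i = 0 then π₁ else π₂) (damp w (E ((if j = 0 then ι₁ else ι₂) u))) := (hπ _).symm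
      _ = (if i = 0 then π₁ else π₂) (E (damp w ((if j = 0 then ι₁ else ι₂) u))) := by
          rw [hEcomm w hw]
      _ = (if i = 0 then π₁ else π₂) (E ((if j = 0 then ι₁ else ι₂) (w u))) := by rw [hι]
      _ = Y i j (w u) := rfl
  have hYT : ∀ i j, ∀ u, Y i j (T u) = T (Y i j u) := by
    intro i j u
    have := hT (Y i j) (hYmem i j)
    calc Y i j (T u) = ((Y i j) * T) u := rfl
      _ = (T * (Y i j)) u := by rw [this]
      _ = T (Y i j u) := rfl
  -- E commutes with damp T
  have hET : ∀ v, E (damp T v) = damp T (E v) := by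
    intro v
    have hdT : ∀ z, damp T z = ι₁ (T (π₁ z)) + ι₂ (T (π₂ z)) := by
      intro z
      rw [← hπ1 T z, ← hπ2 T z, hident (damp T z)]
    have hE1 : ∀ u, E (ι₁ u) = ι₁ (Y 0 0 u) + ι₂ (Y 1 0 u) := by
      intro u
      have := hident (E (ι₁ u))
      rw [← this]
      rfl
    have hE2 : ∀ u, E (ι₂ u) = ι₁ (Y 0 1 u) + ι₂ (Y 1 1 u) := by
      intro u
      have := hident (E (ι₂ u))
      rw [← this]
      rfl
    calc E (damp T v)
        = E (ι₁ (T (π₁ v))) + E (ι₂ (T (π₂ v))) := by rw [hdT v, map_add]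
      _ = ι₁ (Y 0 0 (T (π₁ v))) + ι₂ (Y 1 0 (T (π₁ v)))
          + (ι₁ (Y 0 1 (T (π₂ v))) + ι₂ (Y 1 1 (T (π₂ v)))) := by rw [hE1, hE2]
      _ = ι₁ (T (Y 0 0 (π₁ v))) + ι₂ (T (Y 1 0 (π₁ v)))
          + (ι₁ (T (Y 0 1 (π₂ v))) + ι₂ (T (Y 1 1 (π₂ v)))) := by
          rw [hYT, hYT, hYT, hYT]
      _ = damp T (ι₁ (Y 0 0 (π₁ v))) + damp T (ι₂ (Y 1 0 (π₁ v)))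
          + (damp T (ι₁ (Y 0 1 (π₂ v))) + damp T (ι₂ (Y 1 1 (π₂ v)))) := by
          rw [hι1, hι2, hι1, hι2]
      _ = damp T (ι₁ (Y 0 0 (π₁ v)) + ι₂ (Y 1 0 (π₁ v))
          + (ι₁ (Y 0 1 (π₂ v)) + ι₂ (Y 1 1 (π₂ v)))) := by
          simp only [map_add]
      _ = damp T (E (ι₁ (π₁ v)) + E (ι₂ (π₂ v))) := by rw [hE1, hE2]
      _ = damp T (E v) := by rw [← map_add, hident v]
  -- conclusion
  have hψhL : ψh ∈ L := by
    apply Submodule.le_topologicalClosure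
    exact ⟨1, h1, by rw [hev, damp_one]⟩
  have hEψh : E ψh = ψh := by
    rw [hE_apply]
    apply eq_orthogonalProjection_of_mem_of_inner_eq_zero hψhL
    intro w hw
    rw [sub_self, inner_zero_left]
  have hTψh : damp T ψh ∈ L := by
    have : damp T ψh = E (damp T ψh) := by
      conv_lhs => rw [← hEψh]
      rw [hET]
    rw [this, hE_apply]
    exact SetLike.coe_mem _
  -- transport through Φ
  have himg : Φ '' ((Submodule.map ev A : Submodule ℂ (WithLp 2 (H × H))) : Set _)
      = {z : H × H | ∃ w ∈ A, z = (w ψ₁, w ψ₂)} := by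
    ext z
    constructor
    · rintro ⟨_, ⟨w, hw, rfl⟩, rfl⟩
      refine ⟨w, hw, ?_⟩
      rw [hev, damp_apply]
      rw [ContinuousLinearEquiv.apply_symm_apply]
      rw [hψh, ContinuousLinearEquiv.apply_symm_apply]
    · rintro ⟨w, hw, rfl⟩
      refine ⟨ev w, ⟨w, hw, rfl⟩, ?_⟩
      rw [hev, damp_apply, ContinuousLinearEquiv.apply_symm_apply,
        hψh, ContinuousLinearEquiv.apply_symm_apply]
  have hclosure : Φ (damp T ψh) ∈ closure {z : H × H | ∃ w ∈ A, z = (w ψ₁, w ψ₂)} := by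
    rw [← himg]
    have hcoe : ⇑Φ = ⇑(Φ.toHomeomorph) := rfl
    rw [hcoe, ← Φ.toHomeomorph.image_closure]
    refine ⟨damp T ψh, ?_, rfl⟩
    rw [← Submodule.topologicalClosure_coe]
    exact hTψh
  have hfinal : Φ (damp T ψh) = (T ψ₁, T ψ₂) := by
    rw [damp_apply, ContinuousLinearEquiv.apply_symm_apply, hψh,
      ContinuousLinearEquiv.apply_symm_apply]
  rwa [hfinal] at hclosure

end Density


end DisjointAdditivityAux

end


/-- Disjoint additivity for lattice systems with a product constraint
group `S = S₁ × S₂ × N`: if `M₁` and `M₂` commute elementwise, `U (s₁,1,1)` commutes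
with `M₂`, `U (1,s₂,1)` commutes with `M₁`, and `U (1,1,x)` commutes with both, then,
within the bounded operators on the invariant subspace `K = H_S`, the double commutant
of the compression of `(M₁ ∪ M₂)''` equals the double commutant of
`c(M₁) ∪ c(M₂)`. -/
theorem disjoint_additivity_lattice
    {H : Type*} [NormedAddCommGroup H] [InnerProductSpace ℂ H] [CompleteSpace H]
    {S₁ S₂ N : Type*}
    [Group S₁] [TopologicalSpace S₁] [IsTopologicalGroup S₁] [CompactSpace S₁] [T2Space S₁]
    [Group S₂] [TopologicalSpace S₂] [IsTopologicalGroup S₂] [CompactSpace S₂] [T2Space S₂]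
    [Group N] [TopologicalSpace N] [IsTopologicalGroup N] [CompactSpace N] [T2Space N]
    [MeasurableSpace (S₁ × S₂ × N)] [BorelSpace (S₁ × S₂ × N)]
    (μ : Measure (S₁ × S₂ × N)) [μ.IsHaarMeasure] [IsProbabilityMeasure μ]
    [μ.IsMulRightInvariant] [μ.IsInvInvariant]
    (U : S₁ × S₂ × N → (H →L[ℂ] H))
    (hU_mul : ∀ s t : S₁ × S₂ × N, U (s * t) = U s * U t)
    (hU_unitary : ∀ s : S₁ × S₂ × N, U s ∈ unitary (H →L[ℂ] H))
    (hU_cont : ∀ ψ : H, Continuous fun s => U s ψ)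
    (M₁ M₂ : VonNeumannAlgebra H)
    (hM₁₂ : ∀ a ∈ M₁, ∀ b ∈ M₂, a * b = b * a)
    (hUM₂ : ∀ (s₁ : S₁), ∀ b ∈ M₂, U (s₁, 1, 1) * b = b * U (s₁, 1, 1))
    (hUM₁ : ∀ (s₂ : S₂), ∀ a ∈ M₁, U (1, s₂, 1) * a = a * U (1, s₂, 1))
    (hUN : ∀ (x : N), (∀ a ∈ M₁, U (1, 1, x) * a = a * U (1, 1, x)) ∧
      (∀ b ∈ M₂, U (1, 1, x) * b = b * U (1, 1, x)))
    (K : Submodule ℂ H) [K.HasOrthogonalProjection]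
    (hK : (K : Set H) = {ψ : H | ∀ s : S₁ × S₂ × N, U s ψ = ψ})
    (c : (H →L[ℂ] H) → (K →L[ℂ] K))
    (hc : ∀ (a : H →L[ℂ] H) (ψ : K), c a ψ = K.orthogonalProjectionOnto (a ψ)) :
    Set.centralizer (Set.centralizer
        (c '' (Set.centralizer (Set.centralizer ((M₁ : Set (H →L[ℂ] H)) ∪ (M₂ : Set (H →L[ℂ] H))))))) =
      Set.centralizer (Set.centralizer
        ((c '' (M₁ : Set (H →L[ℂ] H))) ∪ (c '' (M₂ : Set (H →L[ℂ] H))))) := by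
  classical
  -- membership in K
  have memK : ∀ ψ : H, ψ ∈ K ↔ ∀ s : S₁ × S₂ × N, U s ψ = ψ := by
    intro ψ
    rw [← SetLike.mem_coe, hK]
    exact Iff.rfl
  -- basic facts about U
  have hU1 : U 1 = 1 := by
    have h := hU_mul 1 1
    rw [mul_one] at h
    have hu := (Unitary.mem_iff.mp (hU_unitary 1)).1
    have h2 : star (U 1) * (U 1 * U 1) = star (U 1) * U 1 := by rw [← h]
    rw [← mul_assoc, hu, one_mul] at h2
    exact h2
  have hUinv : ∀ s : S₁ × S₂ × N, U s * U s⁻¹ = 1 := by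
    intro s
    rw [← hU_mul, mul_inv_cancel, hU1]
  have hUstar : ∀ s : S₁ × S₂ × N, star (U s) = U s⁻¹ := by
    intro s
    have h1 := (Unitary.mem_iff.mp (hU_unitary s)).1
    calc star (U s) = star (U s) * (U s * U s⁻¹) := by rw [hUinv s, mul_one]
      _ = (star (U s) * U s) * U s⁻¹ := by rw [mul_assoc]
      _ = U s⁻¹ := by rw [h1, one_mul]
  have hUadj : ∀ s : S₁ × S₂ × N, ContinuousLinearMap.adjoint (U s) = U s⁻¹ := by
    intro s
    rw [← ContinuousLinearMap.star_eq_adjoint, hUstar]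
  -- the fixed subspaces of the two distinguished subgroups
  set K₁ : Submodule ℂ H :=
    DisjointAdditivityAux.fixedSpace U {g | ∃ (s₂ : S₂) (x : N), g = (1, s₂, x)} with hK₁def
  set K₂ : Submodule ℂ H :=
    DisjointAdditivityAux.fixedSpace U {g | ∃ (s₁ : S₁) (x : N), g = (s₁, 1, x)} with hK₂def
  have memK₁ : ∀ ψ : H, ψ ∈ K₁ ↔ ∀ (s₂ : S₂) (x : N), U (1, s₂, x) ψ = ψ := by
    intro ψ
    constructor
    · intro h s₂ x
      exact h _ ⟨s₂, x, rfl⟩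
    · rintro h g ⟨s₂, x, rfl⟩
      exact h s₂ x
  have memK₂ : ∀ ψ : H, ψ ∈ K₂ ↔ ∀ (s₁ : S₁) (x : N), U (s₁, 1, x) ψ = ψ := by
    intro ψ
    constructor
    · intro h s₁ x
      exact h _ ⟨s₁, x, rfl⟩
    · rintro h g ⟨s₁, x, rfl⟩
      exact h s₁ x
  haveI : CompleteSpace K₁ :=
    (DisjointAdditivityAux.isClosed_fixedSpace U _).completeSpace_coe
  -- inclusions between the fixed spaces
  have hKsub₁ : ∀ ψ : H, ψ ∈ K → ψ ∈ K₁ := by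
    intro ψ h
    rw [memK₁]
    intro s₂ x
    exact (memK ψ).mp h (1, s₂, x)
  have hKsub₂ : ∀ ψ : H, ψ ∈ K → ψ ∈ K₂ := by
    intro ψ h
    rw [memK₂]
    intro s₁ x
    exact (memK ψ).mp h (s₁, 1, x)
  have hK₁₂ : ∀ ψ : H, ψ ∈ K₁ → ψ ∈ K₂ → ψ ∈ K := by
    intro ψ h1 h2
    rw [memK]
    rintro ⟨s₁, s₂, x⟩
    have he : ((s₁, s₂, x) : S₁ × S₂ × N) = (s₁, 1, 1) * (1, s₂, x) := by
      simp [Prod.mk_mul_mk]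
    rw [he, hU_mul, ContinuousLinearMap.mul_apply, (memK₁ ψ).mp h1 s₂ x]
    exact (memK₂ ψ).mp h2 s₁ 1
  -- M₁ preserves K₁, M₂ preserves K₂
  have haK₁ : ∀ a ∈ (M₁ : Set (H →L[ℂ] H)), ∀ u : H, u ∈ K₁ → a u ∈ K₁ := by
    intro a ha u hu
    rw [memK₁]
    intro s₂ x
    have hcomm : U (1, s₂, x) * a = a * U (1, s₂, x) := by
      have he : ((1 : S₁), s₂, x) = ((1 : S₁), s₂, (1 : N)) * ((1 : S₁), (1 : S₂), x) := by
        simp [Prod.mk_mul_mk]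
      rw [he, hU_mul, mul_assoc, (hUN x).1 a ha, ← mul_assoc, hUM₁ s₂ a ha, mul_assoc]
    calc U (1, s₂, x) (a u) = (U (1, s₂, x) * a) u := rfl
      _ = (a * U (1, s₂, x)) u := by rw [hcomm]
      _ = a (U (1, s₂, x) u) := rfl
      _ = a u := by rw [(memK₁ u).mp hu s₂ x]
  have hbK₂ : ∀ b ∈ (M₂ : Set (H →L[ℂ] H)), ∀ v : H, v ∈ K₂ → b v ∈ K₂ := by
    intro b hb v hv
    rw [memK₂]
    intro s₁ x
    have hcomm : U (s₁, 1, x) * b = b * U (s₁, 1, x) := by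
      have he : (s₁, (1 : S₂), x) = (s₁, (1 : S₂), (1 : N)) * ((1 : S₁), (1 : S₂), x) := by
        simp [Prod.mk_mul_mk]
      rw [he, hU_mul, mul_assoc, (hUN x).2 b hb, ← mul_assoc, hUM₂ s₁ b hb, mul_assoc]
    calc U (s₁, 1, x) (b v) = (U (s₁, 1, x) * b) v := rfl
      _ = (b * U (s₁, 1, x)) v := by rw [hcomm]
      _ = b (U (s₁, 1, x) v) := rfl
      _ = b v := by rw [(memK₂ v).mp hv s₁ x]
  -- K₁ is invariant under the operators U (t₁, 1, y) (normality of {1} × S₂ × N)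
  have hK₁U : ∀ (t₁ : S₁) (y : N), ∀ u : H, u ∈ K₁ → U (t₁, 1, y) u ∈ K₁ := by
    intro t₁ y u hu
    rw [memK₁]
    intro s₂ x
    have e1 : (((1 : S₁), s₂, x) : S₁ × S₂ × N) * (t₁, 1, y) = (t₁, s₂, x * y) := by
      simp [Prod.mk_mul_mk]
    have e2 : ((t₁, (1 : S₂), y) : S₁ × S₂ × N) * (1, s₂, y⁻¹ * (x * y)) = (t₁, s₂, x * y) := by
      simp [Prod.mk_mul_mk, mul_inv_cancel_left]
    calc U (1, s₂, x) (U (t₁, 1, y) u)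
        = U (((1 : S₁), s₂, x) * (t₁, 1, y)) u := by
          rw [hU_mul]
          rfl
      _ = U (((t₁, (1 : S₂), y) : S₁ × S₂ × N) * (1, s₂, y⁻¹ * (x * y))) u := by rw [e1, e2]
      _ = U (t₁, 1, y) (U (1, s₂, y⁻¹ * (x * y)) u) := by
          rw [hU_mul]
          rfl
      _ = U (t₁, 1, y) u := by rw [(memK₁ u).mp hu _ _]
  -- the projection onto K₁ commutes with each U (t₁, 1, y)
  have hE₁U : ∀ (t₁ : S₁) (y : N) (ψ : H),
      (K₁.orthogonalProjectionOnto (U (t₁, 1, y) ψ) : H)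
        = U (t₁, 1, y) (K₁.orthogonalProjectionOnto ψ) := by
    intro t₁ y ψ
    apply DisjointAdditivityAux.proj_comm
    · exact fun v hv => hK₁U t₁ y v hv
    · intro v hv
      have hi : ((t₁, (1 : S₂), y) : S₁ × S₂ × N)⁻¹ = (t₁⁻¹, 1, y⁻¹) := by
        simp [Prod.inv_mk]
      rw [hUadj, hi]
      exact hK₁U t₁⁻¹ y⁻¹ v hv
  -- hence the projection onto K₁ preserves K₂
  have hE₁K₂ : ∀ v : H, v ∈ K₂ → (K₁.orthogonalProjectionOnto v : H) ∈ K₂ := by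
    intro v hv
    rw [memK₂]
    intro s₁ x
    calc U (s₁, 1, x) (K₁.orthogonalProjectionOnto v)
        = (K₁.orthogonalProjectionOnto (U (s₁, 1, x) v) : H) := (hE₁U s₁ x v).symm
      _ = (K₁.orthogonalProjectionOnto v : H) := by rw [(memK₂ v).mp hv s₁ x]
  -- projection of a vector in K₂ ∩ Kᗮ onto K₁ vanishes
  have hE₁zero : ∀ q : H, q ∈ K₂ → q ∈ Kᗮ → (K₁.orthogonalProjectionOnto q : H) = 0 := by
    intro q hq2 hqo
    have hmemKq : (K₁.orthogonalProjectionOnto q : H) ∈ K :=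
      hK₁₂ _ (SetLike.coe_mem _) (hE₁K₂ q hq2)
    have h0 : (inner ℂ ((K₁.orthogonalProjectionOnto q : H)) q : ℂ) = 0 :=
      (Submodule.mem_orthogonal K q).mp hqo _ hmemKq
    have hself : (inner ℂ ((K₁.orthogonalProjectionOnto q : H))
        ((K₁.orthogonalProjectionOnto q : H)) : ℂ) = 0 := by
      rw [inner_orthogonalProjection_left_eq_right, Submodule.orthogonalProjectionOnto_mem_subspace_eq_self,
        ← inner_conj_symm, h0, map_zero]
    exact inner_self_eq_zero.mp hself
  -- hence K₂ ∩ Kᗮ is orthogonal to K₁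
  have horto : ∀ q : H, q ∈ K₂ → q ∈ Kᗮ → ∀ u : H, u ∈ K₁ → (inner ℂ u q : ℂ) = 0 := by
    intro q hq2 hqo u hu
    have h2 : (K₁.orthogonalProjectionOnto u : H) = u := by
      apply eq_orthogonalProjection_of_mem_of_inner_eq_zero hu
      intro w hw
      rw [sub_self, inner_zero_left]
    have h1 : (inner ℂ ((K₁.orthogonalProjectionOnto u : H)) q : ℂ)
        = inner ℂ u ((K₁.orthogonalProjectionOnto q : H)) :=
      inner_orthogonalProjection_left_eq_right K₁ u q
    rw [h2, hE₁zero q hq2 hqo, inner_zero_right] at h1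
    exact h1
  -- mixed multiplicativity of the compression
  have hpmul : ∀ a ∈ (M₁ : Set (H →L[ℂ] H)), ∀ b ∈ (M₂ : Set (H →L[ℂ] H)), ∀ ξ : K,
      K.orthogonalProjectionOnto (a (b (ξ : H)))
        = K.orthogonalProjectionOnto (a ((K.orthogonalProjectionOnto (b (ξ : H)) : H))) := by
    intro a ha b hb ξ
    have hq2 : b (ξ : H) - (K.orthogonalProjectionOnto (b (ξ : H)) : H) ∈ K₂ := by
      apply Submodule.sub_mem
      · exact hbK₂ b hb _ (hKsub₂ _ ξ.2)
      · exact hKsub₂ _ (SetLike.coe_mem _)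
    have hqo : b (ξ : H) - (K.orthogonalProjectionOnto (b (ξ : H)) : H) ∈ Kᗮ :=
      sub_orthogonalProjection_mem_orthogonal _
    have hmem : a (b (ξ : H) - (K.orthogonalProjectionOnto (b (ξ : H)) : H)) ∈ Kᗮ := by
      rw [Submodule.mem_orthogonal]
      intro u hu
      rw [← ContinuousLinearMap.adjoint_inner_left]
      have hstara : ContinuousLinearMap.adjoint a ∈ (M₁ : Set (H →L[ℂ] H)) := by
        rw [← ContinuousLinearMap.star_eq_adjoint]
        exact SetLike.mem_coe.mpr (star_mem (SetLike.mem_coe.mp ha))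
      exact horto _ hq2 hqo _ (haK₁ _ hstara _ (hKsub₁ u hu))
    have hzero : K.orthogonalProjectionOnto
        (a (b (ξ : H) - (K.orthogonalProjectionOnto (b (ξ : H)) : H))) = 0 :=
      Submodule.orthogonalProjectionOnto_apply_of_mem_orthogonal hmem
    have hsub : K.orthogonalProjectionOnto (a (b (ξ : H)))
        - K.orthogonalProjectionOnto (a ((K.orthogonalProjectionOnto (b (ξ : H)) : H)))
        = K.orthogonalProjectionOnto (a (b (ξ : H) - (K.orthogonalProjectionOnto (b (ξ : H)) : H))) := by
      rw [map_sub a, map_sub (K.orthogonalProjectionOnto)]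
    rw [hzero] at hsub
    exact sub_eq_zero.mp hsub
  have hcc : ∀ a ∈ (M₁ : Set (H →L[ℂ] H)), ∀ b ∈ (M₂ : Set (H →L[ℂ] H)), ∀ ξ : K,
      K.orthogonalProjectionOnto (a (b (ξ : H))) = c a (c b ξ) := by
    intro a ha b hb ξ
    rw [hc a (c b ξ), hc b ξ]
    exact hpmul a ha b hb ξ
  -- the *-algebra spanned by products a * b
  set gen : Set (H →L[ℂ] H) :=
    {w | ∃ a ∈ (M₁ : Set (H →L[ℂ] H)), ∃ b ∈ (M₂ : Set (H →L[ℂ] H)), w = a * b} with hgendef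
  set WA : Submodule ℂ (H →L[ℂ] H) := Submodule.span ℂ gen with hWAdef
  have hone : (1 : H →L[ℂ] H) ∈ WA := by
    apply Submodule.subset_span
    exact ⟨1, SetLike.mem_coe.mpr (one_mem M₁), 1, SetLike.mem_coe.mpr (one_mem M₂),
      (one_mul 1).symm⟩
  have hgenmul : ∀ w ∈ gen, ∀ w' ∈ gen, w * w' ∈ gen := by
    rintro _ ⟨a, ha, b, hb, rfl⟩ _ ⟨a', ha', b', hb', rfl⟩
    refine ⟨a * a', SetLike.mem_coe.mpr
      (mul_mem (SetLike.mem_coe.mp ha) (SetLike.mem_coe.mp ha')), b * b',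
      SetLike.mem_coe.mpr (mul_mem (SetLike.mem_coe.mp hb) (SetLike.mem_coe.mp hb')), ?_⟩
    have hcomm : b * a' = a' * b :=
      (hM₁₂ a' (SetLike.mem_coe.mp ha') b (SetLike.mem_coe.mp hb)).symm
    calc a * b * (a' * b') = a * (b * a' * b') := by rw [mul_assoc a b (a' * b'),
        ← mul_assoc b a' b']
      _ = a * (a' * b * b') := by rw [hcomm]
      _ = a * a' * (b * b') := by rw [mul_assoc a' b b', ← mul_assoc a a' (b * b')]
  have hmulWA : ∀ w ∈ WA, ∀ w' ∈ WA, w * w' ∈ WA := by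
    intro w hw w' hw'
    induction hw, hw' using Submodule.span_induction₂ with
    | mem_mem u v hu hv => exact Submodule.subset_span (hgenmul u hu v hv)
    | zero_left v hv => rw [zero_mul]; exact zero_mem _
    | zero_right u hu => rw [mul_zero]; exact zero_mem _
    | add_left u₁ u₂ v h1 h2 h3 ih1 ih2 => rw [add_mul]; exact add_mem ih1 ih2
    | add_right u v₁ v₂ h1 h2 h3 ih1 ih2 => rw [mul_add]; exact add_mem ih1 ih2
    | smul_left r u v h1 h2 ih => rw [smul_mul_assoc]; exact Submodule.smul_mem _ _ ih
    | smul_right r u v h1 h2 ih => rw [mul_smul_comm]; exact Submodule.smul_mem _ _ ih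
  have hstarWA : ∀ w ∈ WA, star w ∈ WA := by
    intro w hw
    induction hw using Submodule.span_induction with
    | mem u hu =>
      obtain ⟨a, ha, b, hb, rfl⟩ := hu
      apply Submodule.subset_span
      refine ⟨star a, SetLike.mem_coe.mpr (star_mem (SetLike.mem_coe.mp ha)), star b,
        SetLike.mem_coe.mpr (star_mem (SetLike.mem_coe.mp hb)), ?_⟩
      rw [star_mul]
      exact (hM₁₂ (star a) (star_mem (SetLike.mem_coe.mp ha))
        (star b) (star_mem (SetLike.mem_coe.mp hb))).symm
    | zero => rw [star_zero]; exact zero_mem _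
    | add u v hu hv ihu ihv => rw [star_add]; exact add_mem ihu ihv
    | smul r u hu ih => rw [star_smul]; exact Submodule.smul_mem _ _ ih
  have hMsub : (M₁ : Set (H →L[ℂ] H)) ∪ (M₂ : Set (H →L[ℂ] H)) ⊆ (WA : Set (H →L[ℂ] H)) := by
    rintro w (h | h)
    · exact Submodule.subset_span ⟨w, h, 1, SetLike.mem_coe.mpr (one_mem M₂), (mul_one w).symm⟩
    · exact Submodule.subset_span ⟨1, SetLike.mem_coe.mpr (one_mem M₁), w, h, (one_mul w).symm⟩
  -- main two inclusions
  apply Set.Subset.antisymm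
  · -- hard direction
    have hsub : c '' (Set.centralizer (Set.centralizer
          ((M₁ : Set (H →L[ℂ] H)) ∪ (M₂ : Set (H →L[ℂ] H))))) ⊆
        Set.centralizer (Set.centralizer
          ((c '' (M₁ : Set (H →L[ℂ] H))) ∪ (c '' (M₂ : Set (H →L[ℂ] H))))) := by
      rintro _ ⟨T, hT, rfl⟩
      rw [Set.mem_centralizer_iff]
      intro x hx
      rw [Set.mem_centralizer_iff] at hx
      -- x commutes with each compression c w for w ∈ WA
      have hxw : ∀ w ∈ WA, ∀ ψ : K, x (K.orthogonalProjectionOnto (w (ψ : H)))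
          = K.orthogonalProjectionOnto (w ((x ψ : H))) := by
        intro w hw
        induction hw using Submodule.span_induction with
        | mem u hu =>
          obtain ⟨a, ha, b, hb, rfl⟩ := hu
          intro ψ
          have h1 : (a * b) (ψ : H) = a (b (ψ : H)) := rfl
          have h2 : (a * b) ((x ψ : H)) = a (b ((x ψ : H))) := rfl
          rw [h1, h2, hcc a ha b hb ψ, hcc a ha b hb (x ψ)]
          have hxa : ∀ η : K, x (c a η) = c a (x η) := by
            intro η
            have hmem : c a ∈ (c '' (M₁ : Set (H →L[ℂ] H))) ∪ (c '' (M₂ : Set (H →L[ℂ] H))) :=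
              Or.inl ⟨a, ha, rfl⟩
            have hcx := hx (c a) hmem
            calc x (c a η) = (x * c a) η := rfl
              _ = (c a * x) η := by rw [← hcx]
              _ = c a (x η) := rfl
          have hxb : ∀ η : K, x (c b η) = c b (x η) := by
            intro η
            have hmem : c b ∈ (c '' (M₁ : Set (H →L[ℂ] H))) ∪ (c '' (M₂ : Set (H →L[ℂ] H))) :=
              Or.inr ⟨b, hb, rfl⟩
            have hcx := hx (c b) hmem
            calc x (c b η) = (x * c b) η := rfl
              _ = (c b * x) η := by rw [← hcx]
              _ = c b (x η) := rfl
          rw [hxa (c b ψ), hxb ψ]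
        | zero =>
          intro ψ
          simp
        | add u v hu hv ihu ihv =>
          intro ψ
          have h1 : (u + v) (ψ : H) = u (ψ : H) + v (ψ : H) := rfl
          have h2 : (u + v) ((x ψ : H)) = u ((x ψ : H)) + v ((x ψ : H)) := rfl
          rw [h1, h2, map_add, map_add, map_add, ihu ψ, ihv ψ]
        | smul r u hu ih =>
          intro ψ
          have h1 : (r • u) (ψ : H) = r • (u (ψ : H)) := rfl
          have h2 : (r • u) ((x ψ : H)) = r • (u ((x ψ : H))) := rfl
          rw [h1, h2, _root_.map_smul, _root_.map_smul, _root_.map_smul, ih ψ]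
      -- T lies in the double centralizer of WA
      have hTW : T ∈ Set.centralizer (Set.centralizer (WA : Set (H →L[ℂ] H))) := by
        rw [Set.mem_centralizer_iff]
        intro m hm
        exact hT m (Set.centralizer_subset hMsub hm)
      -- the key commutation
      have key : ∀ ψ : K, x (c T ψ) = c T (x ψ) := by
        intro ψ
        have hdens := DisjointAdditivityAux.two_vector_density WA hone hmulWA hstarWA T hTW
          (ψ : H) ((x ψ : H))
        set G : H × H → K :=
          fun z => x (K.orthogonalProjectionOnto z.1) - K.orthogonalProjectionOnto z.2 with hGdef
        have hGcont : Continuous G := by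
          apply Continuous.sub
          · exact x.continuous.comp ((K.orthogonalProjectionOnto).continuous.comp continuous_fst)
          · exact (K.orthogonalProjectionOnto).continuous.comp continuous_snd
        have hclosed : IsClosed {z : H × H | G z = 0} := isClosed_eq hGcont continuous_const
        have hsubset : {z : H × H | ∃ w ∈ WA, z = (w (ψ : H), w ((x ψ : H)))}
            ⊆ {z : H × H | G z = 0} := by
          rintro _ ⟨w, hw, rfl⟩
          show x (K.orthogonalProjectionOnto (w (ψ : H))) - K.orthogonalProjectionOnto (w ((x ψ : H))) = 0
          rw [hxw w hw ψ, sub_self]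
        have hmem0 := closure_minimal hsubset hclosed hdens
        have h0 : x (K.orthogonalProjectionOnto (T (ψ : H)))
            - K.orthogonalProjectionOnto (T ((x ψ : H))) = 0 := hmem0
        rw [hc T ψ, hc T (x ψ)]
        exact sub_eq_zero.mp h0
      ext ψ
      simp only [ContinuousLinearMap.mul_apply]
      rw [key ψ]
    have h2 := Set.centralizer_subset (Set.centralizer_subset hsub)
    rwa [Set.centralizer_centralizer_centralizer] at h2
  · -- easy direction
    have hsub : (c '' (M₁ : Set (H →L[ℂ] H))) ∪ (c '' (M₂ : Set (H →L[ℂ] H)))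
        ⊆ c '' (Set.centralizer (Set.centralizer
          ((M₁ : Set (H →L[ℂ] H)) ∪ (M₂ : Set (H →L[ℂ] H))))) := by
      rw [← Set.image_union]
      exact Set.image_mono (f := c) Set.subset_centralizer_centralizer
    exact Set.centralizer_subset (Set.centralizer_subset hsub)
end

section
/- Quotient factorization for compact groups: let G be a compact Hausdorff topological group, N a closed normal subgroup, and H₁, H₂ closed subgroups of G such that (i) H₁ and H₂ commute elementwise, (ii) the set of products H₁H₂N = {h₁h₂n : h₁ ∈ H₁, h₂ ∈ H₂, n ∈ N} is dense in G, and (iii) whenever h₁ ∈ H₁ and h₂ ∈ H₂ satisfy h₁h₂ ∈ N, one has h₁ ∈ N. Then the quotient topological group G/N is isomorphic, as a topological group (a group isomorphism that is also a homeomorphism), to the product (H₁/(H₁ ∩ N)) × (H₂/(H₂ ∩ N)). -/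
/-- Quotient factorization for compact groups: let `G` be a compact
Hausdorff topological group, `N` a closed normal subgroup, and `H₁`, `H₂` closed
subgroups such that (i) `H₁` and `H₂` commute elementwise, (ii) the set of products
`H₁H₂N` is dense in `G`, and (iii) `h₁ h₂ ∈ N` with `h₁ ∈ H₁`, `h₂ ∈ H₂` implies
`h₁ ∈ N`.  Then `G/N` is isomorphic, as a topological group, to
`(H₁/(H₁ ∩ N)) × (H₂/(H₂ ∩ N))`. -/
theorem quotient_factorization_compact
    {G : Type*} [Group G] [TopologicalSpace G] [IsTopologicalGroup G]
    [CompactSpace G] [T2Space G]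
    (N H₁ H₂ : Subgroup G) [N.Normal]
    (hNclosed : IsClosed (N : Set G))
    (hH₁closed : IsClosed (H₁ : Set G)) (hH₂closed : IsClosed (H₂ : Set G))
    (hcomm : ∀ h₁ ∈ H₁, ∀ h₂ ∈ H₂, h₁ * h₂ = h₂ * h₁)
    (hdense : Dense {g : G | ∃ h₁ ∈ H₁, ∃ h₂ ∈ H₂, ∃ n ∈ N, g = h₁ * h₂ * n})
    (hsep : ∀ h₁ ∈ H₁, ∀ h₂ ∈ H₂, h₁ * h₂ ∈ N → h₁ ∈ N) :
    ∃ e : (G ⧸ N) ≃* ((↥H₁ ⧸ N.subgroupOf H₁) × (↥H₂ ⧸ N.subgroupOf H₂)),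
      Continuous e ∧ Continuous e.symm := by
  haveI : IsClosed (N : Set G) := hNclosed
  haveI : CompactSpace ↥H₁ := isCompact_iff_compactSpace.mp hH₁closed.isCompact
  haveI : CompactSpace ↥H₂ := isCompact_iff_compactSpace.mp hH₂closed.isCompact
  -- the multiplication hom from H₁ × H₂ to G
  let φ : (↥H₁ × ↥H₂) →* G :=
    { toFun := fun p => (p.1 : G) * (p.2 : G)
      map_one' := by simp
      map_mul' := by
        rintro ⟨a₁, a₂⟩ ⟨b₁, b₂⟩
        show ((a₁ * b₁ : ↥H₁) : G) * ((a₂ * b₂ : ↥H₂) : G) = (a₁ : G) * a₂ * ((b₁ : G) * b₂)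
        have h := hcomm (b₁ : G) b₁.2 (a₂ : G) a₂.2
        rw [Subgroup.coe_mul, Subgroup.coe_mul, mul_assoc, ← mul_assoc (b₁ : G), h,
          mul_assoc, ← mul_assoc] }
  let ψ : (↥H₁ × ↥H₂) →* (G ⧸ N) := (QuotientGroup.mk' N).comp φ
  have hψcont : Continuous ψ := by
    exact continuous_quot_mk.comp ((continuous_subtype_val.comp continuous_fst).mul
      (continuous_subtype_val.comp continuous_snd))
  -- surjectivity of ψ
  have hψsurj : Function.Surjective ψ := by
    have hrange_closed : IsClosed (Set.range ψ) :=
      (isCompact_range hψcont).isClosed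
    have hrange_dense : Dense (Set.range ψ) := by
      intro x
      obtain ⟨g, rfl⟩ := QuotientGroup.mk_surjective x
      have hg : g ∈ closure {g : G | ∃ h₁ ∈ H₁, ∃ h₂ ∈ H₂, ∃ n ∈ N, g = h₁ * h₂ * n} :=
        hdense g
      have hmaps : Set.MapsTo (QuotientGroup.mk : G → G ⧸ N)
          {g : G | ∃ h₁ ∈ H₁, ∃ h₂ ∈ H₂, ∃ n ∈ N, g = h₁ * h₂ * n} (Set.range ψ) := by
        rintro g ⟨h₁, hh₁, h₂, hh₂, n, hn, rfl⟩
        refine ⟨(⟨h₁, hh₁⟩, ⟨h₂, hh₂⟩), ?_⟩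
        show QuotientGroup.mk (h₁ * h₂) = QuotientGroup.mk (h₁ * h₂ * n)
        exact (QuotientGroup.mk_mul_of_mem _ hn).symm
      have h1 : (QuotientGroup.mk : G → G ⧸ N) g ∈
          closure ((QuotientGroup.mk : G → G ⧸ N) ''
            {g : G | ∃ h₁ ∈ H₁, ∃ h₂ ∈ H₂, ∃ n ∈ N, g = h₁ * h₂ * n}) :=
        image_closure_subset_closure_image continuous_quot_mk (Set.mem_image_of_mem _ hg)
      exact closure_mono hmaps.image_subset h1
    intro x
    have := hrange_dense x
    rw [hrange_closed.closure_eq] at this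
    exact this
  -- kernel of ψ
  have hker : ψ.ker = (N.subgroupOf H₁).prod (N.subgroupOf H₂) := by
    ext ⟨h₁, h₂⟩
    constructor
    · intro h
      have hmem : (h₁ : G) * (h₂ : G) ∈ N := by
        rwa [MonoidHom.mem_ker, MonoidHom.comp_apply, QuotientGroup.mk'_apply,
          QuotientGroup.eq_one_iff] at h
      have h1N : (h₁ : G) ∈ N := hsep _ h₁.2 _ h₂.2 hmem
      have h2N : (h₂ : G) ∈ N := by
        have : (h₁ : G)⁻¹ * ((h₁ : G) * (h₂ : G)) ∈ N := N.mul_mem (N.inv_mem h1N) hmem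
        simpa using this
      exact ⟨h1N, h2N⟩
    · rintro ⟨hm1, hm2⟩
      rw [MonoidHom.mem_ker, MonoidHom.comp_apply, QuotientGroup.mk'_apply,
        QuotientGroup.eq_one_iff]
      exact N.mul_mem hm1 hm2
  -- the product projection hom
  let κ : (↥H₁ × ↥H₂) →* ((↥H₁ ⧸ N.subgroupOf H₁) × (↥H₂ ⧸ N.subgroupOf H₂)) :=
    (QuotientGroup.mk' (N.subgroupOf H₁)).prodMap (QuotientGroup.mk' (N.subgroupOf H₂))
  have hκsurj : Function.Surjective κ :=
    (QuotientGroup.mk'_surjective _).prodMap (QuotientGroup.mk'_surjective _)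
  have hκker : κ.ker = (N.subgroupOf H₁).prod (N.subgroupOf H₂) := by
    rw [MonoidHom.ker_prodMap, QuotientGroup.ker_mk', QuotientGroup.ker_mk']
  -- the open quotient map on the product
  have hoqm : IsOpenQuotientMap κ :=
    QuotientGroup.isOpenQuotientMap_mk.prodMap QuotientGroup.isOpenQuotientMap_mk
  -- assemble the equivalence
  let e₁ : ((↥H₁ × ↥H₂) ⧸ ψ.ker) ≃* (G ⧸ N) :=
    QuotientGroup.quotientKerEquivOfSurjective ψ hψsurj
  let e₂ : ((↥H₁ × ↥H₂) ⧸ ψ.ker) ≃* ((↥H₁ × ↥H₂) ⧸ κ.ker) :=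
    QuotientGroup.quotientMulEquivOfEq (hker.trans hκker.symm)
  let e₃ : ((↥H₁ × ↥H₂) ⧸ κ.ker) ≃* ((↥H₁ ⧸ N.subgroupOf H₁) × (↥H₂ ⧸ N.subgroupOf H₂)) :=
    QuotientGroup.quotientKerEquivOfSurjective κ hκsurj
  let e : (G ⧸ N) ≃* ((↥H₁ ⧸ N.subgroupOf H₁) × (↥H₂ ⧸ N.subgroupOf H₂)) :=
    e₁.symm.trans (e₂.trans e₃)
  have hesymm : Continuous e.symm := by
    rw [← hoqm.continuous_comp_iff]
    have : (e.symm : _ → G ⧸ N) ∘ κ = ψ := by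
      funext p
      show e.symm (κ p) = ψ p
      have h3 : e₃ (QuotientGroup.mk p) = κ p := rfl
      have : e (ψ p) = κ p := by
        show (e₂.trans e₃) (e₁.symm (ψ p)) = κ p
        have h1 : e₁.symm (ψ p) = QuotientGroup.mk p := by
          apply e₁.injective
          simp [e₁]
          rfl
        rw [h1]
        rfl
      rw [← this, MulEquiv.symm_apply_apply]
    rw [this]
    exact hψcont
  refine ⟨e, ?_, hesymm⟩
  · haveI : T2Space (G ⧸ N) := inferInstance
    let h : ((↥H₁ ⧸ N.subgroupOf H₁) × (↥H₂ ⧸ N.subgroupOf H₂)) ≃ₜ (G ⧸ N) :=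
      Continuous.homeoOfEquivCompactToT2 (f := e.symm.toEquiv) hesymm
    have : Continuous (h.symm : (G ⧸ N) → _) := h.symm.continuous
    exact this
end

section
/- Haag duality for the Majorana chain with an even number of fermions: let R ⊆ {1, …, 2ℓ} and let x ∈ Mat be homogeneous with respect to fermion parity. (i) If F x F⁻¹ = x (x bosonic), then x ∈ A(R) if and only if x commutes with χ_j for every j ∈ {1, …, 2ℓ} with j ∉ R. (ii) If F x F⁻¹ = −x (x fermionic), then x ∈ A(R) if and only if x anticommutes with χ_j (x χ_j = −χ_j x) for every j ∈ {1, …, 2ℓ} with j ∉ R. -/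
noncomputable section

/-- The Pauli `X` matrix. -/
def PauliX : Matrix (Fin 2) (Fin 2) ℂ := !![0, 1; 1, 0]

/-- The Pauli `Y` matrix. -/
def PauliY : Matrix (Fin 2) (Fin 2) ℂ := !![0, -Complex.I; Complex.I, 0]

/-- The Pauli `Z` matrix. -/
def PauliZ : Matrix (Fin 2) (Fin 2) ℂ := !![1, 0; 0, -1]

/-- `Mat ℓ` is the algebra of `2^ℓ × 2^ℓ` complex matrices, realized as matrices indexed
by `Fin ℓ → Fin 2` (the `ℓ`-fold Kronecker product of `2 × 2` matrix algebras). -/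
abbrev Mat (ℓ : ℕ) := Matrix (Fin ℓ → Fin 2) (Fin ℓ → Fin 2) ℂ

/-- The `ℓ`-fold Kronecker product of an `ℓ`-tuple of `2 × 2` matrices. -/
def kron {ℓ : ℕ} (A : Fin ℓ → Matrix (Fin 2) (Fin 2) ℂ) : Mat ℓ :=
  Matrix.of fun i j => ∏ k, A k (i k) (j k)

/-- The Majorana matrices (1-based index `j` with `1 ≤ j ≤ 2ℓ`):
`χ_{2k−1} = Z^{⊗(k−1)} ⊗ X ⊗ 1^{⊗(ℓ−k)}` and `χ_{2k} = Z^{⊗(k−1)} ⊗ Y ⊗ 1^{⊗(ℓ−k)}`. -/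
def chi (ℓ : ℕ) (j : ℕ) : Mat ℓ :=
  kron fun m =>
    if 2 * (m : ℕ) + 2 < j then PauliZ
    else if 2 * (m : ℕ) + 1 = j then PauliX
    else if 2 * (m : ℕ) + 2 = j then PauliY
    else 1

/-- The fermion parity operator `F = Z^{⊗ℓ}`. -/
def fermionParity (ℓ : ℕ) : Mat ℓ := kron fun _ => PauliZ

/-- `A(R)`: the unital subalgebra of `Mat ℓ` generated by the Majorana matrices
`χ_j` with `j ∈ R`. -/
def majoranaAlgebra (ℓ : ℕ) (R : Set ℕ) : Subalgebra ℂ (Mat ℓ) :=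
  Algebra.adjoin ℂ {x : Mat ℓ | ∃ j ∈ R, x = chi ℓ j}

end

open Matrix Finset in
lemma kron_mul {ℓ : ℕ} (A B : Fin ℓ → Matrix (Fin 2) (Fin 2) ℂ) :
    kron A * kron B = kron (fun m => A m * B m) := by
  ext i j
  simp only [kron, Matrix.mul_apply, Matrix.of_apply]
  rw [Finset.prod_univ_sum]
  simp [Finset.prod_mul_distrib]
open Matrix Finset

lemma kron_one {ℓ : ℕ} : kron (fun _ : Fin ℓ => (1 : Matrix (Fin 2) (Fin 2) ℂ)) = 1 := by
  ext i j
  simp only [kron, Matrix.of_apply, Matrix.one_apply]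
  by_cases h : i = j
  · subst h; simp
  · rw [if_neg h]
    obtain ⟨m, hm⟩ : ∃ m, i m ≠ j m := by
      by_contra hc; push_neg at hc; exact h (funext hc)
    exact Finset.prod_eq_zero (Finset.mem_univ m) (by simp [hm])

lemma kron_neg_site {ℓ : ℕ} (C : Fin ℓ → Matrix (Fin 2) (Fin 2) ℂ) (m0 : Fin ℓ) :
    kron (fun m => if m = m0 then -(C m) else C m) = -(kron C) := by
  ext i j
  simp only [kron, Matrix.of_apply, Matrix.neg_apply]
  rw [← Finset.mul_prod_erase Finset.univ _ (Finset.mem_univ m0),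
      ← Finset.mul_prod_erase Finset.univ (fun k => C k (i k) (j k)) (Finset.mem_univ m0)]
  rw [if_pos rfl]
  simp only [Matrix.neg_apply, neg_mul]
  congr 1
  congr 1
  exact Finset.prod_congr rfl fun m hm => by
    rw [if_neg (Finset.ne_of_mem_erase hm)]

lemma pauli_sq_X : PauliX * PauliX = 1 := by
  ext i j; fin_cases i <;> fin_cases j <;>
    simp [PauliX, Matrix.mul_apply, Fin.sum_univ_two, Matrix.one_apply]
lemma pauli_sq_Y : PauliY * PauliY = 1 := by
  ext i j; fin_cases i <;> fin_cases j <;>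
    simp [PauliY, Matrix.mul_apply, Fin.sum_univ_two, Matrix.one_apply, Complex.I_mul_I]
lemma pauli_sq_Z : PauliZ * PauliZ = 1 := by
  ext i j; fin_cases i <;> fin_cases j <;>
    simp [PauliZ, Matrix.mul_apply, Fin.sum_univ_two, Matrix.one_apply]
lemma pauli_XY : PauliX * PauliY = -(PauliY * PauliX) := by
  ext i j; fin_cases i <;> fin_cases j <;>
    simp [PauliX, PauliY, Matrix.mul_apply, Fin.sum_univ_two]
lemma pauli_XZ : PauliX * PauliZ = -(PauliZ * PauliX) := by
  ext i j; fin_cases i <;> fin_cases j <;>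
    simp [PauliX, PauliZ, Matrix.mul_apply, Fin.sum_univ_two]
lemma pauli_YZ : PauliY * PauliZ = -(PauliZ * PauliY) := by
  ext i j; fin_cases i <;> fin_cases j <;>
    simp [PauliY, PauliZ, Matrix.mul_apply, Fin.sum_univ_two]

lemma kron_comm_of {ℓ : ℕ} (A B : Fin ℓ → Matrix (Fin 2) (Fin 2) ℂ)
    (h : ∀ m, A m * B m = B m * A m) : kron A * kron B = kron B * kron A := by
  rw [kron_mul, kron_mul, show (fun m => A m * B m) = fun m => B m * A m from funext h]

lemma kron_anticomm {ℓ : ℕ} (A B : Fin ℓ → Matrix (Fin 2) (Fin 2) ℂ) (m0 : Fin ℓ)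
    (h0 : A m0 * B m0 = -(B m0 * A m0)) (h : ∀ m, m ≠ m0 → A m * B m = B m * A m) :
    kron A * kron B = -(kron B * kron A) := by
  rw [kron_mul, kron_mul,
    show (fun m => A m * B m) = fun m => if m = m0 then -(B m * A m) else B m * A m from
      funext fun m => by
        by_cases hm : m = m0
        · subst hm; rw [if_pos rfl, h0]
        · rw [if_neg hm, h m hm],
    kron_neg_site]

/-- the site matrices of `chi`. -/
def chiSite (j : ℕ) (m : ℕ) : Matrix (Fin 2) (Fin 2) ℂ :=
  if 2 * m + 2 < j then PauliZ
  else if 2 * m + 1 = j then PauliX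
  else if 2 * m + 2 = j then PauliY
  else 1

lemma chi_eq_kron (ℓ j : ℕ) : chi ℓ j = kron (fun m => chiSite j m) := rfl

lemma chiSite_sq (j m : ℕ) : chiSite j m * chiSite j m = 1 := by
  unfold chiSite
  split_ifs <;> simp [pauli_sq_X, pauli_sq_Y, pauli_sq_Z]

lemma chi_sq (ℓ j : ℕ) : chi ℓ j * chi ℓ j = 1 := by
  rw [chi_eq_kron, kron_mul]
  rw [show (fun m : Fin ℓ => chiSite j m * chiSite j m) = fun _ => 1 from
    funext fun m => chiSite_sq j m]
  exact kron_one

lemma chi_anticomm_lt {ℓ : ℕ} {j k : ℕ} (hj1 : 1 ≤ j) (hk : j < k) (hk2 : k ≤ 2 * ℓ) :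
    chi ℓ j * chi ℓ k = -(chi ℓ k * chi ℓ j) := by
  have hm0 : (j - 1) / 2 < ℓ := by omega
  rw [chi_eq_kron, chi_eq_kron]
  apply kron_anticomm _ _ ⟨(j - 1) / 2, hm0⟩
  · show chiSite j ((j-1)/2) * chiSite k ((j-1)/2) = -(chiSite k ((j-1)/2) * chiSite j ((j-1)/2))
    unfold chiSite
    split_ifs <;> first
      | omega
      | exact pauli_XY | exact pauli_XZ | exact pauli_YZ
  · intro m hm
    have hmne : (m : ℕ) ≠ (j - 1) / 2 := fun h => hm (Fin.ext h)
    show chiSite j m * chiSite k m = chiSite k m * chiSite j m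
    unfold chiSite
    split_ifs <;> first
      | omega
      | simp

lemma chi_anticomm {ℓ : ℕ} {j k : ℕ} (hj1 : 1 ≤ j) (hj2 : j ≤ 2 * ℓ)
    (hk1 : 1 ≤ k) (hk2 : k ≤ 2 * ℓ) (hjk : j ≠ k) :
    chi ℓ j * chi ℓ k = -(chi ℓ k * chi ℓ j) := by
  rcases lt_or_gt_of_ne hjk with h | h
  · exact chi_anticomm_lt hj1 h hk2
  · have := chi_anticomm_lt hk1 h hj2
    rw [this, neg_neg]

lemma F_mul_F (ℓ : ℕ) : fermionParity ℓ * fermionParity ℓ = 1 := by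
  unfold fermionParity
  rw [kron_mul]
  rw [show (fun _ : Fin ℓ => PauliZ * PauliZ) = fun _ => 1 from funext fun _ => pauli_sq_Z]
  exact kron_one

lemma F_anticomm_chi {ℓ : ℕ} {j : ℕ} (hj1 : 1 ≤ j) (hj2 : j ≤ 2 * ℓ) :
    fermionParity ℓ * chi ℓ j = -(chi ℓ j * fermionParity ℓ) := by
  have hm0 : (j - 1) / 2 < ℓ := by omega
  rw [chi_eq_kron]
  unfold fermionParity
  apply kron_anticomm _ _ ⟨(j - 1) / 2, hm0⟩
  · show PauliZ * chiSite j ((j-1)/2) = -(chiSite j ((j-1)/2) * PauliZ)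
    unfold chiSite
    split_ifs <;> first
      | omega
      | (rw [pauli_XZ, neg_neg]) | (rw [pauli_YZ, neg_neg])
  · intro m hm
    have hmne : (m : ℕ) ≠ (j - 1) / 2 := fun h => hm (Fin.ext h)
    show PauliZ * chiSite j m = chiSite j m * PauliZ
    unfold chiSite
    split_ifs <;> first
      | omega
      | simp

lemma chi_mul_listProd {ℓ : ℕ} {j : ℕ} (hj1 : 1 ≤ j) (hj2 : j ≤ 2 * ℓ)
    (l : List ℕ) (hl : ∀ a ∈ l, 1 ≤ a ∧ a ≤ 2 * ℓ) :
    chi ℓ j * (l.map (chi ℓ)).prod =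
      ((-1 : ℂ) ^ (l.filter (· ≠ j)).length) • ((l.map (chi ℓ)).prod * chi ℓ j) := by
  induction l with
  | nil => simp
  | cons a t ih =>
    have ha := hl a List.mem_cons_self
    have ht : ∀ b ∈ t, 1 ≤ b ∧ b ≤ 2 * ℓ := fun b hb => hl b (List.mem_cons_of_mem a hb)
    have ih' := ih ht
    by_cases haj : a = j
    · subst haj
      simp only [List.map_cons, List.prod_cons]
      rw [show List.filter (· ≠ a) (a :: t) = List.filter (· ≠ a) t from by
        simp [List.filter_cons]]
      calc chi ℓ a * (chi ℓ a * (t.map (chi ℓ)).prod)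
          = chi ℓ a * (((-1 : ℂ) ^ (t.filter (· ≠ a)).length) •
              ((t.map (chi ℓ)).prod * chi ℓ a)) := by rw [ih']
        _ = ((-1 : ℂ) ^ (t.filter (· ≠ a)).length) •
              (chi ℓ a * (t.map (chi ℓ)).prod * chi ℓ a) := by
            rw [mul_smul_comm, Matrix.mul_assoc]
    · have hanti := chi_anticomm hj1 hj2 ha.1 ha.2 (fun h => haj h.symm)
      simp only [List.map_cons, List.prod_cons]
      rw [show List.filter (· ≠ j) (a :: t) = a :: List.filter (· ≠ j) t from by
        simp [List.filter_cons, haj]]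
      simp only [List.length_cons]
      calc chi ℓ j * (chi ℓ a * (t.map (chi ℓ)).prod)
          = (chi ℓ j * chi ℓ a) * (t.map (chi ℓ)).prod := by rw [Matrix.mul_assoc]
        _ = -(chi ℓ a * chi ℓ j) * (t.map (chi ℓ)).prod := by rw [hanti]
        _ = -(chi ℓ a * (chi ℓ j * (t.map (chi ℓ)).prod)) := by
            rw [neg_mul, Matrix.mul_assoc]
        _ = -(chi ℓ a * (((-1 : ℂ) ^ (t.filter (· ≠ j)).length) •
              ((t.map (chi ℓ)).prod * chi ℓ j))) := by rw [ih']
        _ = ((-1 : ℂ) ^ ((t.filter (· ≠ j)).length + 1)) •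
              (chi ℓ a * (t.map (chi ℓ)).prod * chi ℓ j) := by
            rw [mul_smul_comm, ← neg_smul, pow_succ, Matrix.mul_assoc]
            ring_nf

lemma F_mul_listProd {ℓ : ℕ} (l : List ℕ) (hl : ∀ a ∈ l, 1 ≤ a ∧ a ≤ 2 * ℓ) :
    fermionParity ℓ * (l.map (chi ℓ)).prod =
      ((-1 : ℂ) ^ l.length) • ((l.map (chi ℓ)).prod * fermionParity ℓ) := by
  induction l with
  | nil => simp
  | cons a t ih =>
    have ha := hl a List.mem_cons_self
    have ht : ∀ b ∈ t, 1 ≤ b ∧ b ≤ 2 * ℓ := fun b hb => hl b (List.mem_cons_of_mem a hb)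
    have ih' := ih ht
    have hanti := F_anticomm_chi ha.1 ha.2
    simp only [List.map_cons, List.prod_cons, List.length_cons]
    calc fermionParity ℓ * (chi ℓ a * (t.map (chi ℓ)).prod)
        = (fermionParity ℓ * chi ℓ a) * (t.map (chi ℓ)).prod := by rw [Matrix.mul_assoc]
      _ = -(chi ℓ a * fermionParity ℓ) * (t.map (chi ℓ)).prod := by rw [hanti]
      _ = -(chi ℓ a * (fermionParity ℓ * (t.map (chi ℓ)).prod)) := by
          rw [neg_mul, Matrix.mul_assoc]
      _ = -(chi ℓ a * (((-1 : ℂ) ^ t.length) • ((t.map (chi ℓ)).prod * fermionParity ℓ))) := by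
          rw [ih']
      _ = ((-1 : ℂ) ^ (t.length + 1)) •
            (chi ℓ a * (t.map (chi ℓ)).prod * fermionParity ℓ) := by
          rw [mul_smul_comm, ← neg_smul, pow_succ, Matrix.mul_assoc]
          ring_nf

lemma listProd_sq {ℓ : ℕ} (l : List ℕ) (hl : ∀ a ∈ l, 1 ≤ a ∧ a ≤ 2 * ℓ)
    (hnd : l.Nodup) :
    ∃ c : ℂ, (c = 1 ∨ c = -1) ∧ (l.map (chi ℓ)).prod * (l.map (chi ℓ)).prod = c • 1 := by
  induction l with
  | nil => exact ⟨1, Or.inl rfl, by simp⟩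
  | cons a t ih =>
    have ha := hl a List.mem_cons_self
    have ht : ∀ b ∈ t, 1 ≤ b ∧ b ≤ 2 * ℓ := fun b hb => hl b (List.mem_cons_of_mem a hb)
    obtain ⟨c, hc, hcc⟩ := ih ht (List.Nodup.of_cons hnd)
    have hat : a ∉ t := (List.nodup_cons.mp hnd).1
    have hfil : t.filter (· ≠ a) = t := by
      apply List.filter_eq_self.mpr
      intro b hb
      simp only [ne_eq, decide_eq_true_eq]
      exact fun h => hat (h ▸ hb)
    have hmove := chi_mul_listProd ha.1 ha.2 t ht (j := a)
    rw [hfil] at hmove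
    refine ⟨(-1 : ℂ) ^ t.length * c, ?_, ?_⟩
    · rcases hc with h | h <;> rcases Nat.even_or_odd t.length with he | he <;>
        simp [h, he.neg_one_pow]
    · simp only [List.map_cons, List.prod_cons]
      have h1 : (t.map (chi ℓ)).prod * (chi ℓ a * (t.map (chi ℓ)).prod)
          = ((-1:ℂ) ^ t.length) • ((t.map (chi ℓ)).prod * (t.map (chi ℓ)).prod * chi ℓ a) := by
        rw [hmove, mul_smul_comm, Matrix.mul_assoc]
      calc chi ℓ a * (t.map (chi ℓ)).prod * (chi ℓ a * (t.map (chi ℓ)).prod)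
          = chi ℓ a * ((t.map (chi ℓ)).prod * (chi ℓ a * (t.map (chi ℓ)).prod)) := by
            rw [Matrix.mul_assoc]
        _ = chi ℓ a * (((-1:ℂ) ^ t.length) •
              ((t.map (chi ℓ)).prod * (t.map (chi ℓ)).prod * chi ℓ a)) := by rw [h1]
        _ = ((-1:ℂ) ^ t.length) • (chi ℓ a * ((c • (1 : Mat ℓ)) * chi ℓ a)) := by
            rw [hcc, mul_smul_comm]
        _ = ((-1:ℂ) ^ t.length * c) • 1 := by
            rw [smul_mul_assoc, one_mul, mul_smul_comm, smul_smul, chi_sq]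

noncomputable section

/-- Ordered product of Majorana matrices over a finite set of indices. -/
def chiProd (ℓ : ℕ) (S : Finset ℕ) : Mat ℓ :=
  ((S.sort (· ≤ ·)).map (chi ℓ)).prod

lemma sort_filter_length (S : Finset ℕ) (j : ℕ) :
    ((S.sort (· ≤ ·)).filter (· ≠ j)).length = (S.erase j).card := by
  rw [← Finset.filter_ne' S j, Finset.card, Finset.filter_val,
    ← Finset.sort_eq (r := (· ≤ ·)) (s := S)]
  simp

lemma myConjMul {ℓ : ℕ} {A y z : Mat ℓ} (hA : A * A = 1) :
    A * (y * z) * A = (A * y * A) * (A * z * A) := by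
  have h : A * (A * (z * A)) = z * A := by rw [← Matrix.mul_assoc, hA, Matrix.one_mul]
  simp only [Matrix.mul_assoc]
  rw [h]

lemma chi_conj_chiProd {ℓ j : ℕ} (hj1 : 1 ≤ j) (hj2 : j ≤ 2 * ℓ) {S : Finset ℕ}
    (hS : ∀ a ∈ S, 1 ≤ a ∧ a ≤ 2 * ℓ) :
    chi ℓ j * chiProd ℓ S * chi ℓ j = ((-1 : ℂ) ^ (S.erase j).card) • chiProd ℓ S := by
  have h := chi_mul_listProd hj1 hj2 (S.sort (· ≤ ·))
    (fun a ha => hS a ((Finset.mem_sort _).mp ha))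
  rw [sort_filter_length] at h
  rw [chiProd, h, smul_mul_assoc, Matrix.mul_assoc, chi_sq, Matrix.mul_one]

lemma F_conj_chiProd {ℓ : ℕ} {S : Finset ℕ} (hS : ∀ a ∈ S, 1 ≤ a ∧ a ≤ 2 * ℓ) :
    fermionParity ℓ * chiProd ℓ S * fermionParity ℓ = ((-1 : ℂ) ^ S.card) • chiProd ℓ S := by
  have h := F_mul_listProd (S.sort (· ≤ ·)) (fun a ha => hS a ((Finset.mem_sort _).mp ha))
  rw [Finset.length_sort] at h
  rw [chiProd, h, smul_mul_assoc, Matrix.mul_assoc, F_mul_F, Matrix.mul_one]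

lemma chiProd_sq {ℓ : ℕ} {S : Finset ℕ} (hS : ∀ a ∈ S, 1 ≤ a ∧ a ≤ 2 * ℓ) :
    ∃ c : ℂ, (c = 1 ∨ c = -1) ∧ chiProd ℓ S * chiProd ℓ S = c • 1 :=
  listProd_sq _ (fun a ha => hS a ((Finset.mem_sort _).mp ha)) (Finset.sort_nodup _ _)

lemma trace_eq_zero_of_conj_neg {ℓ : ℕ} {A y : Mat ℓ} (hA : A * A = 1)
    (h : A * y * A = -y) : y.trace = 0 := by
  have h1 : (A * y * A).trace = y.trace := by
    rw [Matrix.trace_mul_comm, ← Matrix.mul_assoc, hA, Matrix.one_mul]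
  rw [h, Matrix.trace_neg] at h1
  linear_combination (-1/2 : ℂ) * h1

lemma key_trace_zero {ℓ : ℕ} {S : Finset ℕ} (hS : ∀ a ∈ S, 1 ≤ a ∧ a ≤ 2 * ℓ)
    {x : Mat ℓ} {ε : ℂ} (hε : ε = 1 ∨ ε = -1)
    (hF : fermionParity ℓ * x * fermionParity ℓ = ε • x)
    {j : ℕ} (hjS : j ∈ S) (hjc : chi ℓ j * x * chi ℓ j = ε • x) :
    (chiProd ℓ S * x).trace = 0 := by
  obtain ⟨hj1, hj2⟩ := hS j hjS
  have hcard : 1 ≤ S.card := Finset.card_pos.mpr ⟨j, hjS⟩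
  have herase : (S.erase j).card = S.card - 1 := Finset.card_erase_of_mem hjS
  have hX : chi ℓ j * (chiProd ℓ S * x) * chi ℓ j
      = (((-1 : ℂ) ^ (S.card - 1)) * ε) • (chiProd ℓ S * x) := by
    rw [myConjMul (chi_sq ℓ j), chi_conj_chiProd hj1 hj2 hS, hjc, herase,
      smul_mul_assoc, mul_smul_comm, smul_smul]
  have hFc : fermionParity ℓ * (chiProd ℓ S * x) * fermionParity ℓ
      = (((-1 : ℂ) ^ S.card) * ε) • (chiProd ℓ S * x) := by
    rw [myConjMul (F_mul_F ℓ), F_conj_chiProd hS, hF,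
      smul_mul_assoc, mul_smul_comm, smul_smul]
  rcases Nat.even_or_odd S.card with hp | hp
  · have hp' : Odd (S.card - 1) := by
      rcases hp with ⟨m, hm⟩; exact ⟨m - 1, by omega⟩
    rcases hε with rfl | rfl
    · apply trace_eq_zero_of_conj_neg (chi_sq ℓ j)
      rw [hX, hp'.neg_one_pow]; simp
    · apply trace_eq_zero_of_conj_neg (F_mul_F ℓ)
      rw [hFc, hp.neg_one_pow]; simp
  · have hp' : Even (S.card - 1) := by
      rcases hp with ⟨m, hm⟩; exact ⟨m, by omega⟩
    rcases hε with rfl | rfl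
    · apply trace_eq_zero_of_conj_neg (F_mul_F ℓ)
      rw [hFc, hp.neg_one_pow]; simp
    · apply trace_eq_zero_of_conj_neg (chi_sq ℓ j)
      rw [hX, hp'.neg_one_pow]; simp

end

noncomputable section

lemma trace_one_Mat (ℓ : ℕ) : (1 : Mat ℓ).trace = (2 : ℂ) ^ ℓ := by
  rw [Matrix.trace_one]
  simp [Fintype.card_fun]

lemma chiProd_sq_trace_ne {ℓ : ℕ} {S : Finset ℕ} (hS : ∀ a ∈ S, 1 ≤ a ∧ a ≤ 2 * ℓ) :
    (chiProd ℓ S * chiProd ℓ S).trace ≠ 0 := by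
  obtain ⟨c, hc, hcc⟩ := chiProd_sq hS
  rw [hcc, Matrix.trace_smul, trace_one_Mat]
  rcases hc with rfl | rfl <;> simp [pow_ne_zero]

lemma orth {ℓ : ℕ} {S T : Finset ℕ} (hS : ∀ a ∈ S, 1 ≤ a ∧ a ≤ 2 * ℓ)
    (hT : ∀ a ∈ T, 1 ≤ a ∧ a ≤ 2 * ℓ) {j : ℕ} (hjT : j ∈ T) (hjS : j ∉ S) :
    (chiProd ℓ T * chiProd ℓ S).trace = 0 := by
  have hε : ((-1 : ℂ) ^ S.card = 1 ∨ (-1 : ℂ) ^ S.card = -1) := by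
    rcases Nat.even_or_odd S.card with h | h
    · exact Or.inl h.neg_one_pow
    · exact Or.inr h.neg_one_pow
  have hj := hT j hjT
  apply key_trace_zero hT hε (F_conj_chiProd hS) hjT
  rw [chi_conj_chiProd hj.1 hj.2 hS, Finset.erase_eq_of_notMem hjS]

lemma orth' {ℓ : ℕ} {S T : Finset ℕ} (hS : ∀ a ∈ S, 1 ≤ a ∧ a ≤ 2 * ℓ)
    (hT : ∀ a ∈ T, 1 ≤ a ∧ a ≤ 2 * ℓ) (hne : S ≠ T) :
    (chiProd ℓ T * chiProd ℓ S).trace = 0 := by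
  by_cases h : ∃ j ∈ T, j ∉ S
  · obtain ⟨j, h1, h2⟩ := h
    exact orth hS hT h1 h2
  · push_neg at h
    have hTS : T ⊆ S := h
    have : ∃ j ∈ S, j ∉ T := by
      by_contra hc
      push_neg at hc
      exact hne (Finset.Subset.antisymm hc hTS)
    obtain ⟨j, h1, h2⟩ := this
    rw [Matrix.trace_mul_comm]
    exact orth hT hS h1 h2

lemma card_eq_finrank (ℓ : ℕ) :
    Fintype.card ↥((Finset.Icc 1 (2 * ℓ)).powerset) = Module.finrank ℂ (Mat ℓ) := by
  rw [Fintype.card_coe, Finset.card_powerset, Nat.card_Icc]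
  rw [Module.finrank_matrix, Fintype.card_fun]
  simp only [Fintype.card_fin, Module.finrank_self, mul_one]
  rw [← pow_add]
  congr 1
  omega

lemma chiProd_li (ℓ : ℕ) :
    LinearIndependent ℂ
      (fun i : ↥((Finset.Icc 1 (2 * ℓ)).powerset) => chiProd ℓ i.1) := by
  classical
  rw [Fintype.linearIndependent_iff]
  intro g hg T
  have hIcc : ∀ (b : ↥((Finset.Icc 1 (2 * ℓ)).powerset)), ∀ a ∈ b.1, 1 ≤ a ∧ a ≤ 2 * ℓ :=
    fun b a ha => Finset.mem_Icc.mp (Finset.mem_powerset.mp b.2 ha)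
  have h0 : (chiProd ℓ T.1 * (∑ i, g i • chiProd ℓ i.1)).trace = 0 := by
    rw [hg, Matrix.mul_zero, Matrix.trace_zero]
  rw [Finset.mul_sum] at h0
  simp only [Matrix.mul_smul, Matrix.trace_sum, Matrix.trace_smul, smul_eq_mul] at h0
  rw [Finset.sum_eq_single T] at h0
  · rcases mul_eq_zero.mp h0 with h | h
    · exact h
    · exact absurd h (chiProd_sq_trace_ne (hIcc T))
  · intro b _ hbne
    rw [orth' (hIcc b) (hIcc T) (fun h => hbne (Subtype.ext h)), mul_zero]
  · intro h
    exact absurd (Finset.mem_univ T) h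

lemma chiProd_mem {ℓ : ℕ} {R : Set ℕ} {S : Finset ℕ} (h : ∀ a ∈ S, (a : ℕ) ∈ R) :
    chiProd ℓ S ∈ majoranaAlgebra ℓ R := by
  apply list_prod_mem
  intro y hy
  rw [List.mem_map] at hy
  obtain ⟨a, ha, rfl⟩ := hy
  exact Algebra.subset_adjoin ⟨a, h a ((Finset.mem_sort _).mp ha), rfl⟩

lemma backward_mem {ℓ : ℕ} {R : Set ℕ} (x : Mat ℓ) (ε : ℂ)
    (hε : ε = 1 ∨ ε = -1)
    (hF : fermionParity ℓ * x * fermionParity ℓ = ε • x)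
    (hc : ∀ j : ℕ, 1 ≤ j → j ≤ 2 * ℓ → j ∉ R → chi ℓ j * x * chi ℓ j = ε • x) :
    x ∈ majoranaAlgebra ℓ R := by
  classical
  haveI : Nonempty ↥((Finset.Icc 1 (2 * ℓ)).powerset) :=
    ⟨⟨∅, Finset.empty_mem_powerset _⟩⟩
  have hIcc : ∀ (b : ↥((Finset.Icc 1 (2 * ℓ)).powerset)), ∀ a ∈ b.1, 1 ≤ a ∧ a ≤ 2 * ℓ :=
    fun b a ha => Finset.mem_Icc.mp (Finset.mem_powerset.mp b.2 ha)
  set B := basisOfLinearIndependentOfCardEqFinrank (chiProd_li ℓ) (card_eq_finrank ℓ)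
    with hBdef
  have hB : ∀ i, B i = chiProd ℓ i.1 := by
    intro i
    rw [hBdef, coe_basisOfLinearIndependentOfCardEqFinrank]
  have hx : ∑ i, B.repr x i • B i = x := B.sum_repr x
  rw [← hx]
  apply Subalgebra.sum_mem
  intro i _
  by_cases hiR : ∀ a ∈ i.1, (a : ℕ) ∈ R
  · rw [hB i]
    exact Subalgebra.smul_mem _ (chiProd_mem hiR) _
  · push_neg at hiR
    obtain ⟨j, hjS, hjR⟩ := hiR
    have hj := hIcc i j hjS
    have htr : (chiProd ℓ i.1 * x).trace = 0 :=
      key_trace_zero (hIcc i) hε hF hjS (hc j hj.1 hj.2 hjR)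
    have hexp : (chiProd ℓ i.1 * x).trace
        = B.repr x i * (chiProd ℓ i.1 * chiProd ℓ i.1).trace := by
      conv_lhs => rw [← hx]
      rw [Finset.mul_sum]
      simp only [hB, Matrix.mul_smul, Matrix.trace_sum, Matrix.trace_smul, smul_eq_mul]
      rw [Finset.sum_eq_single i]
      · intro b _ hbne
        rw [orth' (hIcc b) (hIcc i) (fun h => hbne (Subtype.ext h)), mul_zero]
      · intro h
        exact absurd (Finset.mem_univ i) h
    rw [htr] at hexp
    have hrepr : B.repr x i = 0 := by
      rcases mul_eq_zero.mp hexp.symm with h | h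
      · exact h
      · exact absurd h (chiProd_sq_trace_ne (hIcc i))
    rw [hrepr, zero_smul]
    exact zero_mem _

lemma forward_comm {ℓ : ℕ} {R : Set ℕ} (hR : R ⊆ {j | 1 ≤ j ∧ j ≤ 2 * ℓ}) {x : Mat ℓ}
    (hx : x ∈ majoranaAlgebra ℓ R) {j : ℕ} (hj1 : 1 ≤ j) (hj2 : j ≤ 2 * ℓ) (hjR : j ∉ R) :
    chi ℓ j * x * chi ℓ j = fermionParity ℓ * x * fermionParity ℓ := by
  have key : ∀ y, y ∈ Algebra.adjoin ℂ {z : Mat ℓ | ∃ k ∈ R, z = chi ℓ k} →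
      chi ℓ j * y * chi ℓ j = fermionParity ℓ * y * fermionParity ℓ := by
    intro y hy
    induction hy using Algebra.adjoin_induction with
    | mem z hz =>
      obtain ⟨k, hkR, rfl⟩ := hz
      have hk := hR hkR
      have hkj : j ≠ k := fun h => hjR (h ▸ hkR)
      rw [chi_anticomm hj1 hj2 hk.1 hk.2 hkj, F_anticomm_chi hk.1 hk.2]
      rw [Matrix.neg_mul, Matrix.neg_mul, Matrix.mul_assoc, Matrix.mul_assoc,
        chi_sq, F_mul_F]
    | algebraMap r =>
      rw [Algebra.algebraMap_eq_smul_one]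
      simp only [smul_mul_assoc, Matrix.one_mul, Matrix.mul_one, mul_smul_comm,
        chi_sq, F_mul_F]
    | add y z hy hz ihy ihz =>
      rw [Matrix.mul_add, Matrix.add_mul, Matrix.mul_add, Matrix.add_mul, ihy, ihz]
    | mul y z hy hz ihy ihz =>
      rw [myConjMul (chi_sq ℓ j), myConjMul (F_mul_F ℓ), ihy, ihz]
  exact key x hx

end

/-- Haag duality for the Majorana chain with an even number (`2ℓ`) of
fermions: let `R ⊆ {1, …, 2ℓ}` and let `x ∈ Mat ℓ` be homogeneous with respect to
fermion parity `F`.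
(i) If `F x F⁻¹ = x` (`x` bosonic), then `x ∈ A(R)` iff `x` commutes with `χ_j` for
every `j ∈ {1, …, 2ℓ}` with `j ∉ R`.
(ii) If `F x F⁻¹ = −x` (`x` fermionic), then `x ∈ A(R)` iff `x` anticommutes with
`χ_j` for every `j ∈ {1, …, 2ℓ}` with `j ∉ R`. -/
theorem majorana_haag_duality (ℓ : ℕ) (R : Set ℕ)
    (hR : R ⊆ {j | 1 ≤ j ∧ j ≤ 2 * ℓ}) (x : Mat ℓ) :
    (fermionParity ℓ * x * (fermionParity ℓ)⁻¹ = x →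
      (x ∈ majoranaAlgebra ℓ R ↔
        ∀ j : ℕ, 1 ≤ j → j ≤ 2 * ℓ → j ∉ R → x * chi ℓ j = chi ℓ j * x)) ∧
    (fermionParity ℓ * x * (fermionParity ℓ)⁻¹ = -x →
      (x ∈ majoranaAlgebra ℓ R ↔
        ∀ j : ℕ, 1 ≤ j → j ≤ 2 * ℓ → j ∉ R → x * chi ℓ j = -(chi ℓ j * x))) := by
  have hFinv : (fermionParity ℓ)⁻¹ = fermionParity ℓ := Matrix.inv_eq_left_inv (F_mul_F ℓ)
  constructor
  · intro hF
    rw [hFinv] at hF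
    constructor
    · intro hx j hj1 hj2 hjR
      have h := forward_comm hR hx hj1 hj2 hjR
      rw [hF] at h
      calc x * chi ℓ j = (chi ℓ j * chi ℓ j) * (x * chi ℓ j) := by
            rw [chi_sq, Matrix.one_mul]
        _ = chi ℓ j * (chi ℓ j * x * chi ℓ j) := by
            simp only [Matrix.mul_assoc]
        _ = chi ℓ j * x := by rw [h]
    · intro hcomm
      apply backward_mem x 1 (Or.inl rfl)
      · rw [hF, one_smul]
      · intro j hj1 hj2 hjR
        rw [one_smul]
        have h := hcomm j hj1 hj2 hjR
        calc chi ℓ j * x * chi ℓ j = chi ℓ j * (x * chi ℓ j) := by rw [Matrix.mul_assoc]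
          _ = chi ℓ j * (chi ℓ j * x) := by rw [h]
          _ = x := by rw [← Matrix.mul_assoc, chi_sq, Matrix.one_mul]
  · intro hF
    rw [hFinv] at hF
    constructor
    · intro hx j hj1 hj2 hjR
      have h := forward_comm hR hx hj1 hj2 hjR
      rw [hF] at h
      calc x * chi ℓ j = (chi ℓ j * chi ℓ j) * (x * chi ℓ j) := by
            rw [chi_sq, Matrix.one_mul]
        _ = chi ℓ j * (chi ℓ j * x * chi ℓ j) := by
            simp only [Matrix.mul_assoc]
        _ = chi ℓ j * (-x) := by rw [h]
        _ = -(chi ℓ j * x) := by rw [Matrix.mul_neg]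
    · intro hcomm
      apply backward_mem x (-1) (Or.inr rfl)
      · rw [hF, neg_one_smul]
      · intro j hj1 hj2 hjR
        rw [neg_one_smul]
        have h := hcomm j hj1 hj2 hjR
        calc chi ℓ j * x * chi ℓ j = chi ℓ j * (x * chi ℓ j) := by rw [Matrix.mul_assoc]
          _ = chi ℓ j * (-(chi ℓ j * x)) := by rw [h]
          _ = -x := by
              rw [Matrix.mul_neg, ← Matrix.mul_assoc, chi_sq, Matrix.one_mul]
end
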